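/- arXiv:2203.03487 — 4 statements merged into one kernel-verified Lean document; each statement's English description precedes it below -/
import Mathlib

section
/- Let P be a simple thin polyomino. Then for any two cells C and D of P there is a unique path of cells from C to D. -/
open Polynomial

/-- A cell, identified with its lower-left lattice corner. -/
abbrev Cell := ℤ × ℤ

/-- Two cells are neighbours if they share an edge. -/
def Adj (c d : Cell) : Prop := |c.1 - d.1| + |c.2 - d.2| = 1

/-- `b` is reachable from `a` by a chain of neighbouring cells inside `P`. -/
def ReachIn (P : Finset Cell) (a b : Cell) : Prop :=
  Relation.ReflTransGen (fun x y => x ∈ P ∧ y ∈ P ∧ Adj x y) a b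

def IsConnectedSet (P : Finset Cell) : Prop := ∀ a ∈ P, ∀ b ∈ P, ReachIn P a b

/-- A polyomino: a nonempty finite edge-connected collection of cells. -/
def IsPolyomino (P : Finset Cell) : Prop := P.Nonempty ∧ IsConnectedSet P

/-- Simply connected: the complement of `P` in `ℤ²` is connected. -/
def IsSimple (P : Finset Cell) : Prop :=
  ∀ a b : Cell, a ∉ P → b ∉ P →
    Relation.ReflTransGen (fun x y => x ∉ P ∧ y ∉ P ∧ Adj x y) a b

/-- Thin: no 2×2 square of cells. -/
def IsThin (P : Finset Cell) : Prop :=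
  ¬ ∃ p : Cell, p ∈ P ∧ (p.1 + 1, p.2) ∈ P ∧ (p.1, p.2 + 1) ∈ P ∧ (p.1 + 1, p.2 + 1) ∈ P

def IsHorizInterval (I : Finset Cell) : Prop :=
  ∃ j a b : ℤ, a ≤ b ∧ I = (Finset.Icc a b).image (fun x => ((x, j) : Cell))

def IsVertInterval (I : Finset Cell) : Prop :=
  ∃ i a b : ℤ, a ≤ b ∧ I = (Finset.Icc a b).image (fun y => ((i, y) : Cell))

/-- An inner interval of `P`: a horizontal or vertical strip of cells contained in `P`. -/
def IsInnerInterval (P I : Finset Cell) : Prop :=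
  (IsHorizInterval I ∨ IsVertInterval I) ∧ I ⊆ P

/-- A maximal inner interval of `P`. -/
def IsMaxInterval (P I : Finset Cell) : Prop :=
  IsInnerInterval P I ∧ ∀ I', IsInnerInterval P I' → I ⊆ I' → I' = I

/-- A single cell: a cell belonging to exactly one maximal inner interval. -/
def IsSingleCell (P : Finset Cell) (c : Cell) : Prop :=
  c ∈ P ∧ ∃! I, IsMaxInterval P I ∧ c ∈ I

/-- The S-property: every maximal inner interval has exactly one single cell. -/
def SProperty (P : Finset Cell) : Prop :=
  ∀ I, IsMaxInterval P I → ∃! c, c ∈ I ∧ IsSingleCell P c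

/-- A rook configuration: cells of `P`, pairwise not in a common inner interval. -/
def IsRookConfig (P S : Finset Cell) : Prop :=
  S ⊆ P ∧ ∀ c ∈ S, ∀ d ∈ S, c ≠ d → ¬ ∃ I, IsInnerInterval P I ∧ c ∈ I ∧ d ∈ I

open scoped Classical in
/-- The rook polynomial of `P`. -/
noncomputable def rookPoly (P : Finset Cell) : Polynomial ℤ :=
  ∑ S ∈ P.powerset.filter (fun S => IsRookConfig P S), (X : Polynomial ℤ) ^ S.card

/-- The rook number: the degree of the rook polynomial. -/
noncomputable def rookNumber (P : Finset Cell) : ℕ := (rookPoly P).natDegree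

open scoped Classical in
/-- Generating polynomial of rook configurations of `P` avoiding all cells of `A`. -/
noncomputable def rookPolyAvoid (P A : Finset Cell) : Polynomial ℤ :=
  ∑ S ∈ P.powerset.filter (fun S => IsRookConfig P S ∧ Disjoint S A),
    (X : Polynomial ℤ) ^ S.card

open scoped Classical in
/-- An end-cell of an interval: it has exactly one neighbour inside the interval. -/
noncomputable def IsEndCell (I : Finset Cell) (c : Cell) : Prop :=
  c ∈ I ∧ (I.filter (fun d => Adj c d)).card = 1

/-- A collapse datum `(I, J, P^I)` on a polyomino `P`. -/
def IsCollapseDatum (P I J PI : Finset Cell) : Prop :=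
  IsMaxInterval P I ∧ IsMaxInterval P J ∧
  (∃ c, I ∩ J = {c}) ∧
  (∀ J', IsMaxInterval P J' → (∃ c, I ∩ J' = {c}) → J' = J) ∧
  PI ⊆ J ∧ ¬ (I ∩ J ⊆ PI) ∧ IsConnectedSet PI ∧
  (P \ (I ∪ PI)).Nonempty ∧ IsConnectedSet (P \ (I ∪ PI))

/-- The second end-cell of `J` in a collapse datum: the end-cell of `J` other than
the first end-cell (which is `I ∩ J` if `P^I = ∅`, and the cell of `P^I` otherwise). -/
noncomputable def IsSecondEndCell (I J PI : Finset Cell) (c : Cell) : Prop :=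
  IsEndCell J c ∧ ((PI = ∅ ∧ c ∉ I) ∨ (PI ≠ ∅ ∧ c ∉ PI))

open scoped Classical in
/-- The neighbours of a cell `c` inside `P`. -/
noncomputable def nbrs (P : Finset Cell) (c : Cell) : Finset Cell :=
  P.filter (fun d => Adj c d)

open scoped Classical in
/-- The connected component of `x` in `S`. -/
noncomputable def componentOf (S : Finset Cell) (x : Cell) : Finset Cell :=
  S.filter (fun y => ReachIn S x y)

/-- A path of cells in `P` from `c` to `d`: pairwise distinct, consecutive neighbours. -/
def IsCellPath (P : Finset Cell) (l : List Cell) (c d : Cell) : Prop :=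
  l ≠ [] ∧ l.head? = some c ∧ l.getLast? = some d ∧ l.Nodup ∧
    (∀ x ∈ l, x ∈ P) ∧ l.Chain' Adj


section UniquePathAux

lemma adj_symm' {c d : Cell} (h : Adj c d) : Adj d c := by
  unfold Adj at *
  rcases abs_cases (c.1 - d.1) with ⟨h1, _⟩ | ⟨h1, _⟩ <;>
  rcases abs_cases (c.2 - d.2) with ⟨h2, _⟩ | ⟨h2, _⟩ <;>
  rcases abs_cases (d.1 - c.1) with ⟨h3, _⟩ | ⟨h3, _⟩ <;>
  rcases abs_cases (d.2 - c.2) with ⟨h4, _⟩ | ⟨h4, _⟩ <;> omega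

lemma adj_cases' {c d : Cell} (h : Adj c d) :
    (d.1 = c.1 + 1 ∧ d.2 = c.2) ∨ (d.1 = c.1 - 1 ∧ d.2 = c.2) ∨
    (d.1 = c.1 ∧ d.2 = c.2 + 1) ∨ (d.1 = c.1 ∧ d.2 = c.2 - 1) := by
  unfold Adj at h
  rcases abs_cases (c.1 - d.1) with ⟨h1, _⟩ | ⟨h1, _⟩ <;>
  rcases abs_cases (c.2 - d.2) with ⟨h2, _⟩ | ⟨h2, _⟩ <;> omega

/-- indicator: horizontal edge (u,w) crossed by the downward ray from c. -/
noncomputable def dI (c u w : Cell) : ZMod 2 :=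
  if u.2 = w.2 ∧ u.2 < c.2 ∧ ((u.1 = c.1 ∧ w.1 = c.1 + 1) ∨ (w.1 = c.1 ∧ u.1 = c.1 + 1))
  then 1 else 0

/-- indicator: vertical edge (u,w), paired with `dI` via telescoping. -/
noncomputable def rI (c u w : Cell) : ZMod 2 :=
  if u.1 = w.1 ∧ c.1 < u.1 ∧ ((u.2 = c.2 - 1 ∧ w.2 = c.2) ∨ (w.2 = c.2 - 1 ∧ u.2 = c.2))
  then 1 else 0

noncomputable def Jf (c p : Cell) : ZMod 2 := if p.2 < c.2 ∧ c.1 < p.1 then 1 else 0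

lemma key_edge (c : Cell) {u w : Cell} (h : Adj u w) :
    Jf c u + Jf c w = dI c u w + rI c u w := by
  rcases adj_cases' h with ⟨h1, h2⟩ | ⟨h1, h2⟩ | ⟨h1, h2⟩ | ⟨h1, h2⟩ <;>
    · unfold Jf dI rI
      split_ifs <;> first | decide | (exfalso; omega)

lemma ne_cell {u c : Cell} (h : u ≠ c) : u.1 ≠ c.1 ∨ u.2 ≠ c.2 := by
  by_contra hc; push_neg at hc; exact h (Prod.ext hc.1 hc.2)

noncomputable def Dw {n : ℕ} [NeZero n] (v : ZMod n → Cell) (c : Cell) : ZMod 2 :=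
  ∑ i : ZMod n, dI c (v i) (v (i + 1))

noncomputable def Rw {n : ℕ} [NeZero n] (v : ZMod n → Cell) (c : Cell) : ZMod 2 :=
  ∑ i : ZMod n, rI c (v i) (v (i + 1))

lemma Dw_eq_Rw {n : ℕ} [NeZero n] (v : ZMod n → Cell)
    (hA : ∀ i, Adj (v i) (v (i + 1))) (c : Cell) : Dw v c = Rw v c := by
  have h0 : (∑ i : ZMod n, (Jf c (v i) + Jf c (v (i + 1)))) = Dw v c + Rw v c := by
    rw [Dw, Rw, ← Finset.sum_add_distrib]
    exact Finset.sum_congr rfl fun i _ => key_edge c (hA i)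
  have h1 : (∑ i : ZMod n, Jf c (v (i + 1))) = ∑ i : ZMod n, Jf c (v i) :=
    Fintype.sum_equiv (Equiv.addRight 1) _ _ (fun i => rfl)
  rw [Finset.sum_add_distrib, h1, CharTwo.add_self_eq_zero] at h0
  rw [eq_comm, add_eq_zero_iff_eq_neg, CharTwo.neg_eq] at h0
  exact h0

lemma Dw_up {n : ℕ} [NeZero n] (v : ZMod n → Cell) (c : Cell)
    (hc : ∀ i, v i ≠ c) : Dw v (c.1, c.2 + 1) = Dw v c := by
  refine Finset.sum_congr rfl fun i _ => ?_
  have h1 := ne_cell (hc i)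
  have h2 := ne_cell (hc (i + 1))
  unfold dI
  split_ifs <;> first | rfl | (exfalso; omega)

lemma Rw_right {n : ℕ} [NeZero n] (v : ZMod n → Cell) (c : Cell)
    (hc : ∀ i, v i ≠ (c.1 + 1, c.2)) : Rw v (c.1 + 1, c.2) = Rw v c := by
  refine Finset.sum_congr rfl fun i _ => ?_
  have h1 := ne_cell (hc i)
  have h2 := ne_cell (hc (i + 1))
  simp only [ne_eq] at h1 h2
  unfold rI
  split_ifs <;> first | rfl | (exfalso; omega)

lemma Dw_adj {n : ℕ} [NeZero n] (v : ZMod n → Cell)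
    (hA : ∀ i, Adj (v i) (v (i + 1))) {c d : Cell} (hcd : Adj c d)
    (hc : ∀ i, v i ≠ c) (hd : ∀ i, v i ≠ d) : Dw v c = Dw v d := by
  rcases adj_cases' hcd with ⟨h1, h2⟩ | ⟨h1, h2⟩ | ⟨h1, h2⟩ | ⟨h1, h2⟩
  · have : d = (c.1 + 1, c.2) := Prod.ext h1 h2
    subst this
    rw [Dw_eq_Rw v hA, Dw_eq_Rw v hA, Rw_right v c hd]
  · have : c = (d.1 + 1, d.2) := Prod.ext (by omega) (by omega)
    subst this
    rw [Dw_eq_Rw v hA, Dw_eq_Rw v hA, Rw_right v d hc]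
  · have : d = (c.1, c.2 + 1) := Prod.ext h1 h2
    subst this
    rw [Dw_up v c hc]
  · have : c = (d.1, d.2 + 1) := Prod.ext (by omega) (by omega)
    subst this
    rw [Dw_up v d hd]

lemma Dw_notin {P : Finset Cell} (hs : IsSimple P) {n : ℕ} [NeZero n]
    (v : ZMod n → Cell) (hvP : ∀ i, v i ∈ P)
    (hA : ∀ i, Adj (v i) (v (i + 1))) {x : Cell} (hx : x ∉ P) : Dw v x = 0 := by
  classical
  have hPne : P.Nonempty := ⟨v 0, hvP 0⟩
  have hne : (P.image Prod.snd).Nonempty := hPne.image _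
  set m := (P.image Prod.snd).min' hne with hm
  have hmem : ∀ y ∈ P, m ≤ y.2 := fun y hy =>
    Finset.min'_le _ _ (Finset.mem_image_of_mem _ hy)
  have hf : ((0 : ℤ), m - 1) ∉ P := by
    intro h
    have h2 : m ≤ m - 1 := hmem _ h
    omega
  have hDf : Dw v ((0 : ℤ), m - 1) = 0 := by
    rw [Dw]
    refine Finset.sum_eq_zero fun i _ => ?_
    have := hmem _ (hvP i)
    rw [dI, if_neg]
    rintro ⟨-, h2, -⟩
    simp only at h2
    omega
  have hreach := hs x (((0:ℤ), m - 1)) hx hf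
  have hinv : ∀ y : Cell, Relation.ReflTransGen (fun x y => x ∉ P ∧ y ∉ P ∧ Adj x y) x y →
      Dw v x = Dw v y := by
    intro y hy
    induction hy with
    | refl => rfl
    | tail h1 h2 ih =>
      rw [ih]
      exact Dw_adj v hA h2.2.2 (fun i hi => h2.1 (hi ▸ hvP i)) (fun i hi => h2.2.1 (hi ▸ hvP i))
  rw [hinv _ hreach, hDf]

lemma no_cycle {P : Finset Cell} (hs : IsSimple P) (ht : IsThin P) {n : ℕ} [NeZero n]
    (v : ZMod n → Cell) (hvP : ∀ i, v i ∈ P) (hn : 3 ≤ n)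
    (hinj : Function.Injective v) (hA : ∀ i, Adj (v i) (v (i + 1))) : False := by
  classical
  have hstep : ∀ (i : ZMod n) (k : ℕ), 0 < k → k < n → i + (k : ZMod n) ≠ i := by
    intro i k hk hkn h
    have h2 : (k : ZMod n) = 0 := by
      have := congrArg (fun x => x - i) h
      simpa [add_comm, add_sub_cancel_right] using this
    rw [ZMod.natCast_eq_zero_iff] at h2
    have := Nat.le_of_dvd hk h2
    omega
  have h2ne : ∀ i : ZMod n, i + 2 ≠ i := by
    intro i
    have := hstep i 2 (by omega) (by omega)
    simpa using this
  obtain ⟨i₀, -, hmin⟩ := Finset.exists_min_image Finset.univ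
    (fun i => toLex (((v i).2, (v i).1) : ℤ ×ₗ ℤ)) ⟨0, Finset.mem_univ 0⟩
  set u := v i₀ with hu
  have hymin : ∀ i, u.2 ≤ (v i).2 := by
    intro i
    have := hmin i (Finset.mem_univ i)
    rw [Prod.Lex.le_iff] at this
    rcases this with h | ⟨h, -⟩ <;> simp only [ofLex_toLex] at h <;> omega
  have hlex : ∀ i, (v i).2 = u.2 → u.1 ≤ (v i).1 := by
    intro i hyi
    have := hmin i (Finset.mem_univ i)
    rw [Prod.Lex.le_iff] at this
    rcases this with h | ⟨-, h⟩ <;> simp only [ofLex_toLex] at h <;> omega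
  have hopt : ∀ j, Adj u (v j) → (v j).2 = u.2 ∨ (v j).2 = u.2 + 1 →
      v j = ((u.1 + 1, u.2) : Cell) ∨ v j = ((u.1, u.2 + 1) : Cell) := by
    intro j hadj _
    rcases adj_cases' hadj with ⟨h1, h2⟩ | ⟨h1, h2⟩ | ⟨h1, h2⟩ | ⟨h1, h2⟩
    · exact Or.inl (Prod.ext h1 h2)
    · exfalso; have := hlex j h2; omega
    · exact Or.inr (Prod.ext h1 h2)
    · exfalso; have := hymin j; omega
  have hadj_a : Adj u (v (i₀ - 1)) := by
    have := hA (i₀ - 1)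
    rw [sub_add_cancel] at this
    exact adj_symm' this
  have hadj_b : Adj u (v (i₀ + 1)) := hA i₀
  have ha : v (i₀ - 1) = ((u.1 + 1, u.2) : Cell) ∨ v (i₀ - 1) = ((u.1, u.2 + 1) : Cell) :=
    hopt _ hadj_a (by
    rcases adj_cases' hadj_a with ⟨h1,h2⟩|⟨h1,h2⟩|⟨h1,h2⟩|⟨h1,h2⟩ <;>
      first | omega | (exfalso; have := hymin (i₀ - 1); omega))
  have hb : v (i₀ + 1) = ((u.1 + 1, u.2) : Cell) ∨ v (i₀ + 1) = ((u.1, u.2 + 1) : Cell) :=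
    hopt _ hadj_b (by
    rcases adj_cases' hadj_b with ⟨h1,h2⟩|⟨h1,h2⟩|⟨h1,h2⟩|⟨h1,h2⟩ <;>
      first | omega | (exfalso; have := hymin (i₀ + 1); omega))
  have hab : v (i₀ - 1) ≠ v (i₀ + 1) := by
    intro h
    have e := hinj h
    exact h2ne (i₀ - 1) (by rw [show i₀ - 1 + 2 = i₀ + 1 from by ring, ← e])
  by_cases hzP : (u.1 + 1, u.2 + 1) ∈ P
  · have hrP : ((u.1 + 1, u.2) : Cell) ∈ P := by
      rcases ha with h | h
      · rw [← h]; exact hvP _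
      · rcases hb with h2 | h2
        · rw [← h2]; exact hvP _
        · exact absurd (h.trans h2.symm) hab
    have hsP : ((u.1, u.2 + 1) : Cell) ∈ P := by
      rcases ha with h | h
      · rcases hb with h2 | h2
        · exact absurd (h.trans h2.symm) hab
        · rw [← h2]; exact hvP _
      · rw [← h]; exact hvP _
    exact ht ⟨u, hvP i₀, hrP, hsP, hzP⟩
  · have hother : ∀ k, v k ≠ u →
        Adj ((u.1 + 1, u.2) : Cell) (v k) → v k = ((u.1 + 2, u.2) : Cell) := by
      intro k hku hadj
      have hr1 : ((u.1 + 1, u.2) : Cell).1 = u.1 + 1 := rfl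
      have hr2 : ((u.1 + 1, u.2) : Cell).2 = u.2 := rfl
      rcases adj_cases' hadj with ⟨h1, h2⟩ | ⟨h1, h2⟩ | ⟨h1, h2⟩ | ⟨h1, h2⟩
      · exact Prod.ext (by omega) (by omega)
      · exact absurd (Prod.ext (by omega) (by omega)) hku
      · exfalso
        have hvkz : v k = ((u.1 + 1, u.2 + 1) : Cell) := by
          have g1 : (v k).1 = u.1 + 1 := by omega
          have g2 : (v k).2 = u.2 + 1 := by omega
          exact Prod.ext g1 g2
        exact hzP (hvkz ▸ hvP k)
      · have := hymin k; omega
    have hpair : ∃ j : ZMod n,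
        (v j = ((u.1 + 1, u.2) : Cell) ∧ v (j + 1) = ((u.1 + 2, u.2) : Cell)) ∨
        (v j = ((u.1 + 2, u.2) : Cell) ∧ v (j + 1) = ((u.1 + 1, u.2) : Cell)) := by
      rcases hb with h | h
      · refine ⟨i₀ + 1, Or.inl ⟨h, ?_⟩⟩
        refine hother _ (fun he => h2ne i₀ (by
          have := hinj he
          rwa [show i₀ + 1 + 1 = i₀ + 2 from by ring] at this)) ?_
        have := hA (i₀ + 1)
        rwa [h] at this
      · rcases ha with h2 | h2
        · refine ⟨i₀ - 2, Or.inr ⟨?_, by rw [show i₀ - 2 + 1 = i₀ - 1 from by ring]; exact h2⟩⟩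
          have hadj2 : Adj ((u.1 + 1, u.2) : Cell) (v (i₀ - 2)) := by
            have := hA (i₀ - 2)
            rw [show i₀ - 2 + 1 = i₀ - 1 from by ring, h2] at this
            exact adj_symm' this
          refine hother _ (fun he => ?_) hadj2
          have e := hinj he
          exact h2ne (i₀ - 2) (by rw [show i₀ - 2 + 2 = i₀ from by ring]; exact e.symm)
        · exact absurd (h2.trans h.symm) hab
    obtain ⟨j, hpair⟩ := hpair
    have huniq : ∀ i : ZMod n,
        ((v i = ((u.1 + 1, u.2) : Cell) ∧ v (i + 1) = ((u.1 + 2, u.2) : Cell)) ∨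
        (v i = ((u.1 + 2, u.2) : Cell) ∧ v (i + 1) = ((u.1 + 1, u.2) : Cell))) → i = j := by
      intro i hp
      rcases hp with ⟨e1, e2⟩ | ⟨e1, e2⟩ <;> rcases hpair with ⟨f1, f2⟩ | ⟨f1, f2⟩
      · exact hinj (e1.trans f1.symm)
      · have g1 : i = j + 1 := hinj (e1.trans f2.symm)
        have g2 : i + 1 = j := hinj (e2.trans f1.symm)
        exfalso
        exact h2ne j (by rw [show j + 2 = j + 1 + 1 from by ring, ← g1, g2])
      · have g1 : i + 1 = j := hinj (e2.trans f1.symm)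
        have g2 : i = j + 1 := hinj (e1.trans f2.symm)
        exfalso
        exact h2ne j (by rw [show j + 2 = j + 1 + 1 from by ring, ← g2, g1])
      · exact hinj (e1.trans f1.symm)
    have hterm : ∀ i : ZMod n, dI (u.1 + 1, u.2 + 1) (v i) (v (i + 1)) =
        if (v i = ((u.1 + 1, u.2) : Cell) ∧ v (i + 1) = ((u.1 + 2, u.2) : Cell)) ∨
           (v i = ((u.1 + 2, u.2) : Cell) ∧ v (i + 1) = ((u.1 + 1, u.2) : Cell))
        then 1 else 0 := by
      intro i
      have hy1 := hymin i
      have hy2 := hymin (i + 1)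
      rw [dI]
      by_cases hcond : (v i = ((u.1 + 1, u.2) : Cell) ∧ v (i + 1) = ((u.1 + 2, u.2) : Cell)) ∨
          (v i = ((u.1 + 2, u.2) : Cell) ∧ v (i + 1) = ((u.1 + 1, u.2) : Cell))
      · rw [if_pos hcond, if_pos]
        rcases hcond with ⟨e1, e2⟩ | ⟨e1, e2⟩ <;> rw [e1, e2] <;>
          exact ⟨by omega, by omega, by omega⟩
      · rw [if_neg hcond, if_neg]
        rintro ⟨ey, hlt, ex | ex⟩
        · have hlt' : (v i).2 < u.2 + 1 := hlt
          obtain ⟨ex1, ex2⟩ := ex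
          refine hcond (Or.inl ⟨?_, ?_⟩)
          · have g1 : (v i).1 = u.1 + 1 := by omega
            have g2 : (v i).2 = u.2 := by omega
            exact Prod.ext g1 g2
          · have g1 : (v (i + 1)).1 = u.1 + 2 := by omega
            have g2 : (v (i + 1)).2 = u.2 := by omega
            exact Prod.ext g1 g2
        · have hlt' : (v i).2 < u.2 + 1 := hlt
          obtain ⟨ex1, ex2⟩ := ex
          refine hcond (Or.inr ⟨?_, ?_⟩)
          · have g1 : (v i).1 = u.1 + 2 := by omega
            have g2 : (v i).2 = u.2 := by omega
            exact Prod.ext g1 g2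
          · have g1 : (v (i + 1)).1 = u.1 + 1 := by omega
            have g2 : (v (i + 1)).2 = u.2 := by omega
            exact Prod.ext g1 g2
    have hone : Dw v (u.1 + 1, u.2 + 1) = 1 := by
      rw [Dw, Finset.sum_congr rfl (fun i _ => hterm i)]
      rw [Finset.sum_eq_single j (fun i _ hne => by
        rw [if_neg]; intro hp; exact hne (huniq i hp))
        (fun h => absurd (Finset.mem_univ j) h)]
      rw [if_pos hpair]
    have hzero : Dw v (u.1 + 1, u.2 + 1) = 0 := Dw_notin hs v hvP hA hzP
    rw [hone] at hzero
    exact absurd hzero (by decide)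

lemma cycle_list_false (P : Finset Cell) (hs : IsSimple P) (ht : IsThin P)
    (L : List Cell) (hne : L ≠ [])
    (hlen : 3 ≤ L.length) (hnd : L.Nodup) (hch : L.Chain' Adj)
    (hcl : Adj (L.getLast hne) (L.head hne)) (hP : ∀ x ∈ L, x ∈ P) : False := by
  classical
  set n := L.length with hn
  haveI : NeZero n := ⟨by omega⟩
  haveI : Fact (1 < n) := ⟨by omega⟩
  set v : ZMod n → Cell := fun i => L[i.val]'(i.val_lt) with hv
  have hinj : Function.Injective v := by
    intro i j hij
    have hval : i.val = j.val := (List.Nodup.getElem_inj_iff hnd).mp hij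
    exact ZMod.val_injective n hval
  have hvP : ∀ i, v i ∈ P := fun i => hP _ (List.getElem_mem _)
  have hA : ∀ i, Adj (v i) (v (i + 1)) := by
    intro i
    have hval : (i + 1).val = (i.val + 1) % n := by
      rw [ZMod.val_add, ZMod.val_one]
    have hvlt := i.val_lt
    by_cases hc : i.val + 1 < n
    · have h2 : (i + 1).val = i.val + 1 := by rw [hval, Nat.mod_eq_of_lt hc]
      have hchain := List.isChain_iff_getElem.mp hch i.val (by omega)
      have e1 : v i = L[i.val]'(by omega) := rfl
      have e2 : v (i + 1) = L[i.val + 1]'(by omega) := by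
        rw [hv]; simp only
        congr 1
      rw [e1, e2]; exact hchain
    · have h2 : (i + 1).val = 0 := by
        have : i.val + 1 = n := by omega
        rw [hval, this, Nat.mod_self]
      have hlast : v i = L.getLast hne := by
        rw [List.getLast_eq_getElem hne]
        rw [hv]; simp only
        congr 1
        omega
      have hhead : v (i + 1) = L.head hne := by
        rw [List.head_eq_getElem_zero hne]
        rw [hv]; simp only
        congr 1
      rw [hlast, hhead]
      exact hcl
  exact no_cycle hs ht v hvP (by omega) hinj hA

lemma mem_of_getLast?' {α : Type*} {l : List α} {a : α} (h : l.getLast? = some a) : a ∈ l := by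
  have hne : l ≠ [] := by rintro rfl; simp at h
  rw [List.getLast?_eq_getLast hne] at h
  rw [← Option.some.inj h]
  exact List.getLast_mem hne

lemma exists_path (P : Finset Cell) {a b : Cell} (ha : a ∈ P) (h : ReachIn P a b) :
    ∃ l, IsCellPath P l a b := by
  classical
  induction h with
  | refl => exact ⟨[a], by simp, rfl, rfl, by simp, by simp [ha], List.isChain_singleton a⟩
  | @tail b c hab hbc ih =>
    obtain ⟨l, hne, hhead, hlast, hnd, hmem, hch⟩ := ih
    by_cases hcl : c ∈ l
    · obtain ⟨s, t, rfl⟩ := List.append_of_mem hcl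
      refine ⟨s ++ [c], by simp, ?_, List.getLast?_concat, ?_, ?_, ?_⟩
      · rw [← hhead]; cases s <;> simp
      · have : (s ++ [c]).Sublist ((s ++ [c]) ++ t) := (List.prefix_append _ t).sublist
        rw [← List.append_cons] at this
        exact List.Nodup.sublist this hnd
      · intro x hx
        apply hmem
        rcases List.mem_append.mp hx with h | h
        · exact List.mem_append.mpr (Or.inl h)
        · simp at h; subst h; exact List.mem_append.mpr (Or.inr (List.mem_cons_self))
      · have : ((s ++ [c]) ++ t).Chain' Adj := by rw [← List.append_cons]; exact hch
        exact (List.isChain_append.mp this).1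
    · refine ⟨l ++ [c], by simp [hne], ?_, List.getLast?_concat, ?_, ?_, ?_⟩
      · rw [List.head?_append_of_ne_nil _ hne]; exact hhead
      · exact List.nodup_append'.mpr ⟨hnd, List.nodup_singleton c,
          fun x hx hx2 => by simp at hx2; subst hx2; exact hcl hx⟩
      · intro x hx
        rcases List.mem_append.mp hx with h | h
        · exact hmem x h
        · simp at h; subst h; exact hbc.2.1
      · refine List.isChain_append.mpr ⟨hch, List.isChain_singleton c, ?_⟩
        intro x hx y hy
        simp at hy; subst hy
        rw [hlast] at hx; simp at hx; subst hx
        exact hbc.2.2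

lemma first_meet {t₂ : List Cell} (t₁ : List Cell) (hex : ∃ x ∈ t₁, x ∈ t₂) :
    ∃ s w rest, t₁ = s ++ w :: rest ∧ w ∈ t₂ ∧ ∀ y ∈ s, y ∉ t₂ := by
  classical
  induction t₁ with
  | nil => simp at hex
  | cons x xs ih =>
    by_cases hx : x ∈ t₂
    · exact ⟨[], x, xs, rfl, hx, by simp⟩
    · obtain ⟨y, hy, hyt⟩ := hex
      rcases List.mem_cons.mp hy with rfl | hy'
      · exact absurd hyt hx
      · obtain ⟨s, w, rest, heq, hw, hsd⟩ := ih ⟨y, hy', hyt⟩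
        refine ⟨x :: s, w, rest, by rw [heq]; rfl, hw, ?_⟩
        intro z hz
        rcases List.mem_cons.mp hz with rfl | hz'
        · exact hx
        · exact hsd z hz'

end UniquePathAux

lemma paths_eq (P : Finset Cell)
    (hnc : ∀ (L : List Cell) (hne : L ≠ []), 3 ≤ L.length → L.Nodup → L.Chain' Adj →
      Adj (L.getLast hne) (L.head hne) → (∀ x ∈ L, x ∈ P) → False) :
    ∀ N : ℕ, ∀ c d : Cell, ∀ l₁ l₂ : List Cell, l₁.length + l₂.length ≤ N →
      IsCellPath P l₁ c d → IsCellPath P l₂ c d → l₁ = l₂ := by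
  classical
  intro N
  induction N with
  | zero =>
    intro c d l₁ l₂ hlen h1 h2
    exfalso
    have := List.length_pos_iff.mpr h1.1
    have := List.length_pos_iff.mpr h2.1
    omega
  | succ N ih =>
    intro c d l₁ l₂ hlen h1 h2
    obtain ⟨hne1, hhead1, hlast1, hnd1, hmem1, hch1⟩ := h1
    obtain ⟨hne2, hhead2, hlast2, hnd2, hmem2, hch2⟩ := h2
    obtain ⟨a1, t₁, rfl⟩ := List.exists_cons_of_ne_nil hne1
    obtain ⟨a2, t₂, rfl⟩ := List.exists_cons_of_ne_nil hne2
    have ha1 : c = a1 := by simpa using hhead1.symm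
    have ha2 : c = a2 := by simpa using hhead2.symm
    subst ha1; subst ha2
    have singleton_case : ∀ t : List Cell, (c :: t).Nodup → (c :: t).getLast? = some c →
        t = [] := by
      intro t hnd hlast
      cases t with
      | nil => rfl
      | cons b bs =>
        exfalso
        have h3 : (b :: bs).getLast? = some c := by
          rwa [List.getLast?_cons_cons] at hlast
        exact (List.nodup_cons.mp hnd).1 (mem_of_getLast?' h3)
    cases t₁ with
    | nil =>
      have hd : c = d := by simpa using hlast1
      subst hd
      rw [singleton_case t₂ hnd2 hlast2]
    | cons x₁ u₁ =>
      cases t₂ with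
      | nil =>
        have hd : c = d := by simpa using hlast2
        subst hd
        rw [singleton_case (x₁ :: u₁) hnd1 hlast1]
      | cons x₂ u₂ =>
        by_cases hx12 : x₁ = x₂
        · subst hx12
          have e : x₁ :: u₁ = x₁ :: u₂ := by
            refine ih x₁ d _ _ (by simp at hlen ⊢; omega) ?_ ?_
            · exact ⟨by simp, rfl, by rwa [List.getLast?_cons_cons] at hlast1,
                (List.nodup_cons.mp hnd1).2, fun x hx => hmem1 x (List.mem_cons_of_mem _ hx),
                (List.isChain_cons.mp hch1).2⟩
            · exact ⟨by simp, rfl, by rwa [List.getLast?_cons_cons] at hlast2,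
                (List.nodup_cons.mp hnd2).2, fun x hx => hmem2 x (List.mem_cons_of_mem _ hx),
                (List.isChain_cons.mp hch2).2⟩
          rw [e]
        · exfalso
          have hcnotin1 : c ∉ x₁ :: u₁ := (List.nodup_cons.mp hnd1).1
          have hcnotin2 : c ∉ x₂ :: u₂ := (List.nodup_cons.mp hnd2).1
          have hndT₁ : (x₁ :: u₁).Nodup := (List.nodup_cons.mp hnd1).2
          have hndT₂ : (x₂ :: u₂).Nodup := (List.nodup_cons.mp hnd2).2
          have hdT₁ : d ∈ x₁ :: u₁ := mem_of_getLast?'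
            (by rwa [List.getLast?_cons_cons] at hlast1)
          have hdT₂ : d ∈ x₂ :: u₂ := mem_of_getLast?'
            (by rwa [List.getLast?_cons_cons] at hlast2)
          have hadj1 : Adj c x₁ := (List.isChain_cons_cons.mp hch1).1
          have hadj2 : Adj c x₂ := (List.isChain_cons_cons.mp hch2).1
          have hchT₁ : (x₁ :: u₁).Chain' Adj := (List.isChain_cons.mp hch1).2
          have hchT₂ : (x₂ :: u₂).Chain' Adj := (List.isChain_cons.mp hch2).2
          obtain ⟨s, w, rest, hsplit1, hwT₂, hsd⟩ := first_meet (x₁ :: u₁) ⟨d, hdT₁, hdT₂⟩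
          obtain ⟨s₂, r₂, hsplit2⟩ := List.append_of_mem hwT₂
          have hx₁head : ∀ X : List Cell, (s ++ w :: X).head? = some x₁ := by
            intro X
            cases s with
            | nil =>
              have : x₁ = w := by simpa using congrArg List.head? hsplit1
              simp [this]
            | cons q qs =>
              have : x₁ = q := by simpa using congrArg List.head? hsplit1
              simp [this]
          have hnds2w : (s₂ ++ [w]).Nodup := by
            have h5 : (s₂ ++ w :: r₂).Nodup := by rwa [hsplit2] at hndT₂
            rw [List.append_cons] at h5
            exact h5.sublist (List.prefix_append _ r₂).sublist
          have hwnots₂ : w ∉ s₂ := by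
            have := List.disjoint_of_nodup_append (by rwa [hsplit2] at hndT₂)
            exact fun hw2 => this hw2 (List.mem_cons_self)
          have hndsw : (s ++ [w]).Nodup := by
            have h5 : (s ++ w :: rest).Nodup := by rwa [hsplit1] at hndT₁
            rw [List.append_cons] at h5
            exact h5.sublist (List.prefix_append _ rest).sublist
          have hchsw : (s ++ [w]).Chain' Adj := by
            have h5 : ((s ++ [w]) ++ rest).Chain' Adj := by
              rw [← List.append_cons]; rwa [hsplit1] at hchT₁
            exact (List.isChain_append.mp h5).1
          have hchs2w : (s₂ ++ [w]).Chain' Adj := by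
            have h5 : ((s₂ ++ [w]) ++ r₂).Chain' Adj := by
              rw [← List.append_cons]; rwa [hsplit2] at hchT₂
            exact (List.isChain_append.mp h5).1
          set L := c :: (s ++ w :: s₂.reverse) with hL
          have hLne : L ≠ [] := by simp [hL]
          have hss2 : s ≠ [] ∨ s₂ ≠ [] := by
            by_contra hcon
            push_neg at hcon
            obtain ⟨rfl, rfl⟩ := hcon
            simp only [List.nil_append] at hsplit1 hsplit2
            have e1 : x₁ = w := by simpa using congrArg List.head? hsplit1
            have e2 : x₂ = w := by simpa using congrArg List.head? hsplit2
            exact hx12 (e1.trans e2.symm)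
          have hLlen : 3 ≤ L.length := by
            have h6 : L.length = 2 + s.length + s₂.length := by
              rw [hL]; simp; omega
            rcases hss2 with h | h
            · have := List.length_pos_iff.mpr h; omega
            · have := List.length_pos_iff.mpr h; omega
          have hLnd : L.Nodup := by
            rw [hL, List.nodup_cons]
            constructor
            · intro hc
              rcases List.mem_append.mp hc with h | h
              · exact hcnotin1 (hsplit1 ▸ List.mem_append.mpr (Or.inl h))
              · rcases List.mem_cons.mp h with rfl | h2
                · exact hcnotin2 hwT₂
                · exact hcnotin2 (hsplit2 ▸ List.mem_append.mpr
                    (Or.inl (List.mem_reverse.mp h2)))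
            · rw [show s ++ w :: s₂.reverse = (s ++ [w]) ++ s₂.reverse from by
                rw [← List.append_cons]]
              refine List.nodup_append'.mpr ⟨hndsw, List.nodup_reverse.mpr (List.nodup_append'.mp hnds2w).1, ?_⟩
              intro x hx hx2
              rw [List.mem_reverse] at hx2
              rcases List.mem_append.mp hx with h | h
              · exact hsd x h (hsplit2 ▸ List.mem_append.mpr (Or.inl hx2))
              · simp at h; subst h; exact hwnots₂ hx2
          have hLch : L.Chain' Adj := by
            rw [hL]
            refine List.isChain_cons.mpr ⟨?_, ?_⟩
            · intro y hy
              rw [hx₁head s₂.reverse] at hy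
              simp at hy; subst hy; exact hadj1
            · refine List.isChain_append.mpr ⟨(List.isChain_append.mp hchsw).1, ?_, ?_⟩
              · have h7 : ((s₂ ++ [w]).reverse).Chain' Adj :=
                  (List.isChain_reverse).mpr (hchs2w.imp fun a b h => adj_symm' h)
                rwa [List.reverse_append, List.reverse_singleton, List.singleton_append] at h7
              · intro x hx y hy
                simp only [List.head?_cons, Option.mem_def, Option.some.injEq] at hy
                subst hy
                exact (List.isChain_append.mp hchsw).2.2 x hx w (by simp)
          have hLhead : L.head hLne = c := rfl
          have hLlast : L.getLast hLne = x₂ := by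
            have h8 : L.getLast? = some x₂ := by
              cases s₂ with
              | nil =>
                have hw2 : x₂ = w := by simpa using congrArg List.head? hsplit2
                rw [hL, show c :: (s ++ w :: List.reverse ([] : List Cell))
                    = (c :: s) ++ [w] from by simp]
                rw [List.getLast?_concat]
                exact congrArg some hw2.symm
              | cons q qs =>
                have hq : x₂ = q := by simpa using congrArg List.head? hsplit2
                rw [hL, show c :: (s ++ w :: (q :: qs).reverse)
                    = (c :: (s ++ w :: qs.reverse)) ++ [q] from by simp]
                rw [List.getLast?_concat]
                exact congrArg some hq.symm
            have h9 := List.getLast?_eq_getLast hLne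
            exact Option.some.inj (h9.symm.trans h8)
          have hLP : ∀ x ∈ L, x ∈ P := by
            intro x hx
            rw [hL] at hx
            rcases List.mem_cons.mp hx with rfl | hx2
            · exact hmem1 x (List.mem_cons_self)
            · rcases List.mem_append.mp hx2 with h | h
              · exact hmem1 x (List.mem_cons_of_mem _
                  (hsplit1 ▸ List.mem_append.mpr (Or.inl h)))
              · rcases List.mem_cons.mp h with rfl | h2
                · exact hmem2 x (List.mem_cons_of_mem _ hwT₂)
                · exact hmem2 x (List.mem_cons_of_mem _
                    (hsplit2 ▸ List.mem_append.mpr (Or.inl (List.mem_reverse.mp h2))))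
          refine hnc L hLne hLlen hLnd hLch ?_ hLP
          rw [hLhead, hLlast]
          exact adj_symm' hadj2

/-- In a simple thin polyomino, any two cells are joined by a unique path. -/
theorem unique_path (P : Finset Cell) (hP : IsPolyomino P) (hs : IsSimple P)
    (ht : IsThin P) :
    ∀ c ∈ P, ∀ d ∈ P, ∃! l : List Cell, IsCellPath P l c d := by
  intro c hc d hd
  have hnc : ∀ (L : List Cell) (hne : L ≠ []), 3 ≤ L.length → L.Nodup → L.Chain' Adj →
      Adj (L.getLast hne) (L.head hne) → (∀ x ∈ L, x ∈ P) → False :=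
    fun L hne h3 hnd hch hcl hP' => cycle_list_false P hs ht L hne h3 hnd hch hcl hP'
  obtain ⟨l, hl⟩ := exists_path P hc (hP.2 c hc d hd)
  exact ⟨l, hl, fun l' hl' =>
    paths_eq P hnc (l'.length + l.length) c d l' l le_rfl hl' hl⟩
end

section
/- Let P be a simple thin polyomino with the S-property that is not a single cell, let (I,J,P^I) be a collapse datum, and suppose additionally the S-property holds. Then the maximal inner interval I has exactly two cells. -/
open Polynomial

/-! Every cell of `I` other than the cell of `I ∩ J` is single: a second maximal interval through
it would have to be perpendicular to `I`, hence equal to `J` by the uniqueness clause of the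
collapse datum. By the S-property at most one cell of `I` is single, so `I` has at most two cells,
and a maximal interval of a polyomino with more than one cell is never a single cell. -/

lemma Adj.ne {c d : Cell} (h : Adj c d) : c ≠ d := by
  rintro rfl
  simp [Adj] at h

lemma Adj.isHorizInterval_pair_or_isVertInterval_pair {c d : Cell} (h : Adj c d) :
    IsHorizInterval {c, d} ∨ IsVertInterval {c, d} := by
  obtain ⟨c₁, c₂⟩ := c
  obtain ⟨d₁, d₂⟩ := d
  have : (|c₁ - d₁| = 1 ∧ c₂ = d₂) ∨ (c₁ = d₁ ∧ |c₂ - d₂| = 1) := by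
    simp only [Adj] at h
    cases abs_cases (c₁ - d₁) <;> cases abs_cases (c₂ - d₂) <;> omega
  rcases this with ⟨h₁, rfl⟩ | ⟨rfl, h₂⟩
  · refine .inl ⟨c₂, min c₁ d₁, max c₁ d₁, min_le_max, ?_⟩
    ext ⟨x, y⟩
    cases abs_cases (c₁ - d₁) <;> simp <;> omega
  · refine .inr ⟨c₁, min c₂ d₂, max c₂ d₂, min_le_max, ?_⟩
    ext ⟨x, y⟩
    cases abs_cases (c₂ - d₂) <;> simp <;> omega

lemma IsInnerInterval.nonempty {P I : Finset Cell} (h : IsInnerInterval P I) : I.Nonempty := by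
  rcases h.1 with ⟨_, a, b, hab, rfl⟩ | ⟨_, a, b, hab, rfl⟩ <;>
    exact ⟨_, Finset.mem_image_of_mem _ (Finset.left_mem_Icc.2 hab)⟩

lemma IsHorizInterval.union {I K : Finset Cell} (hI : IsHorizInterval I)
    (hK : IsHorizInterval K) (hIK : (I ∩ K).Nonempty) : IsHorizInterval (I ∪ K) := by
  obtain ⟨j, a, b, hab, rfl⟩ := hI
  obtain ⟨j', a', b', hab', rfl⟩ := hK
  obtain ⟨_, hd⟩ := hIK
  simp only [Finset.mem_inter, Finset.mem_image, Finset.mem_Icc] at hd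
  obtain ⟨⟨s, hs, rfl⟩, t, ht, hts⟩ := hd
  simp only [Prod.mk.injEq] at hts
  refine ⟨j, min a a', max b b', by omega, ?_⟩
  ext ⟨x, y⟩
  simp only [Finset.mem_union, Finset.mem_image, Finset.mem_Icc, Prod.mk.injEq, existsAndEq,
    true_and]
  omega

lemma IsVertInterval.union {I K : Finset Cell} (hI : IsVertInterval I)
    (hK : IsVertInterval K) (hIK : (I ∩ K).Nonempty) : IsVertInterval (I ∪ K) := by
  obtain ⟨i, a, b, hab, rfl⟩ := hI
  obtain ⟨i', a', b', hab', rfl⟩ := hK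
  obtain ⟨_, hd⟩ := hIK
  simp only [Finset.mem_inter, Finset.mem_image, Finset.mem_Icc] at hd
  obtain ⟨⟨s, hs, rfl⟩, t, ht, hts⟩ := hd
  simp only [Prod.mk.injEq] at hts
  refine ⟨i, min a a', max b b', by omega, ?_⟩
  ext ⟨x, y⟩
  simp only [Finset.mem_union, Finset.mem_image, Finset.mem_Icc, Prod.mk.injEq,
    exists_eq_right_right]
  omega

lemma IsHorizInterval.card_inter_le_one {I K : Finset Cell} (hI : IsHorizInterval I)
    (hK : IsVertInterval K) : (I ∩ K).card ≤ 1 := by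
  obtain ⟨j, a, b, -, rfl⟩ := hI
  obtain ⟨i, a', b', -, rfl⟩ := hK
  refine Finset.card_le_one_iff_subset_singleton.2 ⟨(i, j), fun p hp => ?_⟩
  simp only [Finset.mem_inter, Finset.mem_image] at hp
  obtain ⟨⟨s, -, rfl⟩, t, -, hts⟩ := hp
  simp only [Prod.mk.injEq] at hts
  simp [hts.1]

lemma IsMaxInterval.eq_of_union {P I K : Finset Cell} (hI : IsMaxInterval P I)
    (hK : IsMaxInterval P K) (h : IsHorizInterval (I ∪ K) ∨ IsVertInterval (I ∪ K)) : I = K :=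
  have hIK : IsInnerInterval P (I ∪ K) := ⟨h, Finset.union_subset hI.1.2 hK.1.2⟩
  (hI.2 _ hIK Finset.subset_union_left).symm.trans (hK.2 _ hIK Finset.subset_union_right)

lemma IsMaxInterval.card_inter_le_one {P I K : Finset Cell} (hI : IsMaxInterval P I)
    (hK : IsMaxInterval P K) (hne : I ≠ K) : (I ∩ K).card ≤ 1 := by
  rcases (I ∩ K).eq_empty_or_nonempty with h | h
  · simp [h]
  rcases hI.1.1 with hIh | hIv <;> rcases hK.1.1 with hKh | hKv
  · exact absurd (hI.eq_of_union hK (.inl (hIh.union hKh h))) hne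
  · exact hIh.card_inter_le_one hKv
  · exact Finset.inter_comm I K ▸ hKh.card_inter_le_one hIv
  · exact absurd (hI.eq_of_union hK (.inr (hIv.union hKv h))) hne

lemma IsMaxInterval.inter_eq_singleton {P I K : Finset Cell} (hI : IsMaxInterval P I)
    (hK : IsMaxInterval P K) (hne : I ≠ K) {d : Cell} (hdI : d ∈ I) (hdK : d ∈ K) :
    I ∩ K = {d} :=
  Finset.eq_singleton_iff_unique_mem.2 ⟨Finset.mem_inter.2 ⟨hdI, hdK⟩, fun _ hp =>
    Finset.card_le_one.1 (hI.card_inter_le_one hK hne) _ hp _ (Finset.mem_inter.2 ⟨hdI, hdK⟩)⟩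

lemma IsConnectedSet.exists_adj {P : Finset Cell} (hP : IsConnectedSet P) {b c : Cell}
    (hb : b ∈ P) (hc : c ∈ P) (hbc : b ≠ c) : ∃ y ∈ P, Adj c y := by
  rcases (hP c hc b hb).cases_head with rfl | ⟨y, ⟨-, hy, hcy⟩, -⟩
  · exact absurd rfl hbc
  · exact ⟨y, hy, hcy⟩

lemma IsMaxInterval.ne_singleton {P I : Finset Cell} (hP : IsPolyomino P)
    (hcell : ¬ ∃ c : Cell, P = {c}) (hI : IsMaxInterval P I) (c : Cell) : I ≠ {c} := by
  rintro rfl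
  have hc : c ∈ P := hI.1.2 (Finset.mem_singleton_self c)
  obtain ⟨b, hb, hbc⟩ : ∃ b ∈ P, b ≠ c := by
    by_contra! h
    exact hcell ⟨c, Finset.eq_singleton_iff_unique_mem.2 ⟨hc, h⟩⟩
  obtain ⟨y, hy, hcy⟩ := hP.2.exists_adj hb hc hbc
  have hpair : IsInnerInterval P {c, y} :=
    ⟨hcy.isHorizInterval_pair_or_isVertInterval_pair, Finset.insert_subset hc (by simpa)⟩
  have hyc : y ∈ ({c} : Finset Cell) :=
    hI.2 _ hpair (by simp) ▸ Finset.mem_insert_of_mem (Finset.mem_singleton_self y)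
  exact hcy.ne (Finset.mem_singleton.1 hyc).symm

lemma IsMaxInterval.one_lt_card {P I : Finset Cell} (hP : IsPolyomino P)
    (hcell : ¬ ∃ c : Cell, P = {c}) (hI : IsMaxInterval P I) : 1 < I.card := by
  rcases hI.1.nonempty.exists_eq_singleton_or_nontrivial with ⟨c, rfl⟩ | h
  · exact absurd rfl (hI.ne_singleton hP hcell c)
  · exact Finset.one_lt_card_iff_nontrivial.2 h

lemma IsCollapseDatum.isSingleCell {P I J PI : Finset Cell} (hcd : IsCollapseDatum P I J PI)
    {d : Cell} (hdI : d ∈ I) (hdJ : d ∉ J) : IsSingleCell P d := by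
  obtain ⟨hI, -, -, hJ, -⟩ := hcd
  refine ⟨hI.1.2 hdI, I, ⟨hI, hdI⟩, fun K ⟨hK, hdK⟩ => ?_⟩
  by_contra hKI
  exact hdJ (hJ K hK ⟨d, hI.inter_eq_singleton hK (Ne.symm hKI) hdI hdK⟩ ▸ hdK)

lemma IsCollapseDatum.card_le_two {P I J PI : Finset Cell} (hcd : IsCollapseDatum P I J PI)
    (hS : SProperty P) : I.card ≤ 2 := by
  obtain ⟨c, hIJ⟩ := hcd.2.2.1
  obtain ⟨x, -, hx⟩ := hS I hcd.1
  have hsub : I ⊆ {c, x} := fun d hdI => by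
    by_cases hdJ : d ∈ J
    · have hd : d ∈ I ∩ J := Finset.mem_inter.2 ⟨hdI, hdJ⟩
      rw [hIJ, Finset.mem_singleton] at hd
      simp [hd]
    · simp [hx d ⟨hdI, hcd.isSingleCell hdI hdJ⟩]
  exact (Finset.card_le_card hsub).trans Finset.card_le_two

theorem collapse_interval_card_two_general (P I J PI : Finset Cell) (hP : IsPolyomino P)
    (hS : SProperty P) (hcell : ¬ ∃ c : Cell, P = {c})
    (hcd : IsCollapseDatum P I J PI) : I.card = 2 := by
  have := hcd.1.one_lt_card hP hcell
  have := hcd.card_le_two hS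
  omega

/-- For a simple thin polyomino with the S-property that is not a cell, the interval `I`
of any collapse datum has exactly two cells. -/
theorem collapse_interval_card_two (P I J PI : Finset Cell) (hP : IsPolyomino P)
    (hs : IsSimple P) (ht : IsThin P) (hS : SProperty P)
    (hcell : ¬ ∃ c : Cell, P = {c})
    (hcd : IsCollapseDatum P I J PI) : I.card = 2 :=
  collapse_interval_card_two_general P I J PI hP hS hcell hcd
end

section
/- Let P be a simple thin polyomino with the S-property and let Q_1,...,Q_k be the components arising from a collapse datum as in the construction (Q = P \ {C}, components of Q \ J). Then the rook numbers satisfy Σ_{i=1}^k r(Q_i) = r(P) − 2. -/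
open Polynomial

-- ### basic lemmas

lemma horiz_mem_snd {K : Finset Cell} (h : IsHorizInterval K) {x y : Cell}
    (hx : x ∈ K) (hy : y ∈ K) : x.2 = y.2 := by
  obtain ⟨j, a, b, hab, rfl⟩ := h
  simp only [Finset.mem_image] at hx hy
  obtain ⟨u, -, rfl⟩ := hx; obtain ⟨v, -, rfl⟩ := hy; rfl

lemma vert_mem_fst {K : Finset Cell} (h : IsVertInterval K) {x y : Cell}
    (hx : x ∈ K) (hy : y ∈ K) : x.1 = y.1 := by
  obtain ⟨i, a, b, hab, rfl⟩ := h
  simp only [Finset.mem_image] at hx hy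
  obtain ⟨u, -, rfl⟩ := hx; obtain ⟨v, -, rfl⟩ := hy; rfl

lemma inner_nonempty {P K : Finset Cell} (h : IsInnerInterval P K) : K.Nonempty := by
  rcases h.1 with ⟨j, a, b, hab, rfl⟩ | ⟨i, a, b, hab, rfl⟩ <;>
    exact Finset.Nonempty.image ⟨a, Finset.mem_Icc.2 ⟨le_refl a, hab⟩⟩ _

lemma both_card_le_one {K : Finset Cell} (hh : IsHorizInterval K) (hv : IsVertInterval K) :
    K.card ≤ 1 := by
  rcases (inner_nonempty (P := K) ⟨Or.inl hh, le_refl _⟩) with ⟨x, hx⟩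
  apply Finset.card_le_one.2
  intro u hu v hv'
  have h1 := vert_mem_fst hv hu hv'
  have h2 := horiz_mem_snd hh hu hv'
  exact Prod.ext h1 h2

lemma singleton_inner {P : Finset Cell} {c : Cell} (hc : c ∈ P) : IsInnerInterval P {c} := by
  refine ⟨Or.inl ⟨c.2, c.1, c.1, le_refl _, ?_⟩, by simpa using hc⟩
  simp

lemma mem_horiz_img {j a b : ℤ} {c : Cell} :
    c ∈ (Finset.Icc a b).image (fun x => ((x, j) : Cell)) ↔ a ≤ c.1 ∧ c.1 ≤ b ∧ c.2 = j := by
  obtain ⟨u, v⟩ := c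
  simp only [Finset.mem_image, Finset.mem_Icc, Prod.ext_iff]
  constructor
  · rintro ⟨w, ⟨h1, h2⟩, rfl, rfl⟩; exact ⟨h1, h2, rfl⟩
  · rintro ⟨h1, h2, rfl⟩; exact ⟨u, ⟨h1, h2⟩, rfl, rfl⟩

lemma mem_vert_img {i a b : ℤ} {c : Cell} :
    c ∈ (Finset.Icc a b).image (fun y => ((i, y) : Cell)) ↔ a ≤ c.2 ∧ c.2 ≤ b ∧ c.1 = i := by
  obtain ⟨u, v⟩ := c
  simp only [Finset.mem_image, Finset.mem_Icc, Prod.ext_iff]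
  constructor
  · rintro ⟨w, ⟨h1, h2⟩, rfl, rfl⟩; exact ⟨h1, h2, rfl⟩
  · rintro ⟨h1, h2, rfl⟩; exact ⟨v, ⟨h1, h2⟩, rfl, rfl⟩

lemma pair_inner {P : Finset Cell} {x y : Cell} (hx : x ∈ P) (hy : y ∈ P) (h : Adj x y) :
    IsInnerInterval P ({x, y} : Finset Cell) := by
  have hsub : ({x, y} : Finset Cell) ⊆ P := by
    intro z hz; rcases Finset.mem_insert.1 hz with rfl | hz
    · exact hx
    · rw [Finset.mem_singleton.1 hz]; exact hy
  unfold Adj at h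
  refine ⟨?_, hsub⟩
  have hcase : (y.1 = x.1 + 1 ∧ y.2 = x.2) ∨ (x.1 = y.1 + 1 ∧ y.2 = x.2) ∨
      (y.2 = x.2 + 1 ∧ y.1 = x.1) ∨ (x.2 = y.2 + 1 ∧ y.1 = x.1) := by
    rcases abs_cases (x.1 - y.1) with ⟨h1, h1'⟩ | ⟨h1, h1'⟩ <;>
      rcases abs_cases (x.2 - y.2) with ⟨h2, h2'⟩ | ⟨h2, h2'⟩ <;> omega
  rcases hcase with ⟨e1, e2⟩ | ⟨e1, e2⟩ | ⟨e1, e2⟩ | ⟨e1, e2⟩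
  · exact Or.inl ⟨x.2, x.1, y.1, by omega, by
      ext ⟨u, v⟩
      simp only [Finset.mem_insert, Finset.mem_singleton, mem_horiz_img, Prod.ext_iff]
      omega⟩
  · exact Or.inl ⟨x.2, y.1, x.1, by omega, by
      ext ⟨u, v⟩
      simp only [Finset.mem_insert, Finset.mem_singleton, mem_horiz_img, Prod.ext_iff]
      omega⟩
  · exact Or.inr ⟨x.1, x.2, y.2, by omega, by
      ext ⟨u, v⟩
      simp only [Finset.mem_insert, Finset.mem_singleton, mem_vert_img, Prod.ext_iff]
      omega⟩
  · exact Or.inr ⟨x.1, y.2, x.2, by omega, by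
      ext ⟨u, v⟩
      simp only [Finset.mem_insert, Finset.mem_singleton, mem_vert_img, Prod.ext_iff]
      omega⟩

lemma exists_max_extend {P K : Finset Cell} (h : IsInnerInterval P K) :
    ∃ L, IsMaxInterval P L ∧ K ⊆ L := by
  classical
  set F := P.powerset.filter (fun L => IsInnerInterval P L ∧ K ⊆ L) with hF
  have hKF : K ∈ F := by
    simp only [hF, Finset.mem_filter, Finset.mem_powerset]
    exact ⟨h.2, h, subset_refl _⟩
  obtain ⟨L, hLF, hmax⟩ := Finset.exists_max_image F Finset.card ⟨K, hKF⟩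
  simp only [hF, Finset.mem_filter, Finset.mem_powerset] at hLF
  refine ⟨L, ⟨hLF.2.1, ?_⟩, hLF.2.2⟩
  intro L' hL' hsub
  have hL'F : L' ∈ F := by
    simp only [hF, Finset.mem_filter, Finset.mem_powerset]
    exact ⟨hL'.2, hL', hLF.2.2.trans hsub⟩
  exact (Finset.eq_of_subset_of_card_le hsub (hmax L' hL'F)).symm

lemma exists_max_mem {P : Finset Cell} {c : Cell} (hc : c ∈ P) :
    ∃ L, IsMaxInterval P L ∧ c ∈ L := by
  obtain ⟨L, hL, hsub⟩ := exists_max_extend (singleton_inner hc)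
  exact ⟨L, hL, hsub (Finset.mem_singleton_self c)⟩

-- ### parallel maximal intervals sharing a cell are equal

lemma vert_union_interval {i a b a' b' : ℤ} (hab : a ≤ b) (hab' : a' ≤ b')
    (hover : ∃ t, a ≤ t ∧ t ≤ b ∧ a' ≤ t ∧ t ≤ b') :
    ((Finset.Icc a b).image (fun y => ((i, y) : Cell))) ∪
      ((Finset.Icc a' b').image (fun y => ((i, y) : Cell))) =
    (Finset.Icc (min a a') (max b b')).image (fun y => ((i, y) : Cell)) := by
  obtain ⟨t, ht⟩ := hover
  ext ⟨u, v⟩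
  simp only [Finset.mem_union, mem_vert_img, le_min_iff, min_le_iff, le_max_iff, max_le_iff]
  omega

lemma horiz_union_interval {j a b a' b' : ℤ} (hab : a ≤ b) (hab' : a' ≤ b')
    (hover : ∃ t, a ≤ t ∧ t ≤ b ∧ a' ≤ t ∧ t ≤ b') :
    ((Finset.Icc a b).image (fun x => ((x, j) : Cell))) ∪
      ((Finset.Icc a' b').image (fun x => ((x, j) : Cell))) =
    (Finset.Icc (min a a') (max b b')).image (fun x => ((x, j) : Cell)) := by
  obtain ⟨t, ht⟩ := hover
  ext ⟨u, v⟩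
  simp only [Finset.mem_union, mem_horiz_img, le_min_iff, min_le_iff, le_max_iff, max_le_iff]
  omega

lemma vert_parallel_eq {P L M : Finset Cell} (hL : IsMaxInterval P L) (hM : IsMaxInterval P M)
    (hLv : IsVertInterval L) (hMv : IsVertInterval M) {z : Cell} (hzL : z ∈ L) (hzM : z ∈ M) :
    L = M := by
  obtain ⟨i, a, b, hab, rfl⟩ := hLv
  obtain ⟨i', a', b', hab', rfl⟩ := hMv
  have h1 := mem_vert_img.1 hzL
  have h2 := mem_vert_img.1 hzM
  obtain rfl : i' = i := by omega
  have hunion := vert_union_interval (i := i') hab hab' ⟨z.2, h1.1, h1.2.1, h2.1, h2.2.1⟩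
  have hinner : IsInnerInterval P ((Finset.Icc (min a a') (max b b')).image
      (fun y => ((i', y) : Cell))) := by
    refine ⟨Or.inr ⟨i', _, _, by omega, rfl⟩, ?_⟩
    rw [← hunion]
    exact Finset.union_subset hL.1.2 hM.1.2
  have e1 := hL.2 _ hinner (by rw [← hunion]; exact Finset.subset_union_left)
  have e2 := hM.2 _ hinner (by rw [← hunion]; exact Finset.subset_union_right)
  rw [← e1, ← e2]

lemma horiz_parallel_eq {P L M : Finset Cell} (hL : IsMaxInterval P L) (hM : IsMaxInterval P M)
    (hLv : IsHorizInterval L) (hMv : IsHorizInterval M) {z : Cell} (hzL : z ∈ L) (hzM : z ∈ M) :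
    L = M := by
  obtain ⟨j, a, b, hab, rfl⟩ := hLv
  obtain ⟨j', a', b', hab', rfl⟩ := hMv
  have h1 := mem_horiz_img.1 hzL
  have h2 := mem_horiz_img.1 hzM
  obtain rfl : j' = j := by omega
  have hunion := horiz_union_interval (j := j') hab hab' ⟨z.1, h1.1, h1.2.1, h2.1, h2.2.1⟩
  have hinner : IsInnerInterval P ((Finset.Icc (min a a') (max b b')).image
      (fun x => ((x, j') : Cell))) := by
    refine ⟨Or.inl ⟨j', _, _, by omega, rfl⟩, ?_⟩
    rw [← hunion]
    exact Finset.union_subset hL.1.2 hM.1.2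
  have e1 := hL.2 _ hinner (by rw [← hunion]; exact Finset.subset_union_left)
  have e2 := hM.2 _ hinner (by rw [← hunion]; exact Finset.subset_union_right)
  rw [← e1, ← e2]

-- ### single cells

lemma single_unique_max {P : Finset Cell} {c : Cell} (hc : IsSingleCell P c)
    {L M : Finset Cell} (hL : IsMaxInterval P L) (hcL : c ∈ L)
    (hM : IsMaxInterval P M) (hcM : c ∈ M) : L = M := by
  obtain ⟨-, K, -, hKuniq⟩ := hc
  rw [hKuniq L ⟨hL, hcL⟩, hKuniq M ⟨hM, hcM⟩]

lemma not_single_of_two {P : Finset Cell} {c : Cell} {L M : Finset Cell}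
    (hL : IsMaxInterval P L) (hcL : c ∈ L) (hM : IsMaxInterval P M) (hcM : c ∈ M)
    (hne : L ≠ M) : ¬ IsSingleCell P c :=
  fun hc => hne (single_unique_max hc hL hcL hM hcM)

lemma max_card_two {P : Finset Cell} {L M : Finset Cell} {c : Cell}
    (hL : IsMaxInterval P L) (hM : IsMaxInterval P M) (hne : L ≠ M)
    (hcL : c ∈ L) (hcM : c ∈ M) : 2 ≤ L.card ∧ 2 ≤ M.card := by
  constructor
  · by_contra h
    have h0 : L.card ≤ 1 := by omega
    have h1 : L = {c} := by
      have := Finset.card_le_one.1 h0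
      apply Finset.eq_singleton_iff_unique_mem.2 ⟨hcL, fun x hx => this x hx c hcL⟩
    refine hne ?_
    rw [hL.2 M hM.1 (by rw [h1]; exact Finset.singleton_subset_iff.2 hcM)]
  · by_contra h
    have h0 : M.card ≤ 1 := by omega
    have h1 : M = {c} := by
      have := Finset.card_le_one.1 h0
      apply Finset.eq_singleton_iff_unique_mem.2 ⟨hcM, fun x hx => this x hx c hcM⟩
    refine hne ?_
    rw [← hM.2 L hL.1 (by rw [h1]; exact Finset.singleton_subset_iff.2 hcL)]

lemma nonsingle_has_vert {P : Finset Cell} {c : Cell} (hc : c ∈ P)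
    (hns : ¬ IsSingleCell P c) :
    ∃ V, IsMaxInterval P V ∧ c ∈ V ∧ IsVertInterval V ∧ ¬ IsHorizInterval V := by
  obtain ⟨L, hL, hcL⟩ := exists_max_mem hc
  have : ¬ ∃! K, IsMaxInterval P K ∧ c ∈ K := fun h => hns ⟨hc, h⟩
  have hM : ∃ M, (IsMaxInterval P M ∧ c ∈ M) ∧ M ≠ L := by
    by_contra h
    push_neg at h
    exact this ⟨L, ⟨hL, hcL⟩, fun M hMM => h M hMM⟩
  obtain ⟨M, ⟨hM, hcM⟩, hne⟩ := hM
  obtain ⟨h2L, h2M⟩ := max_card_two hL hM (Ne.symm hne) hcL hcM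
  -- L and M each exclusively horiz or vert
  rcases hL.1.1 with hLh | hLv <;> rcases hM.1.1 with hMh | hMv
  · exact absurd (horiz_parallel_eq hL hM hLh hMh hcL hcM).symm hne
  · refine ⟨M, hM, hcM, hMv, fun hMh => ?_⟩
    have := both_card_le_one hMh hMv; omega
  · refine ⟨L, hL, hcL, hLv, fun hLh => ?_⟩
    have := both_card_le_one hLh hLv; omega
  · exact absurd (vert_parallel_eq hL hM hLv hMv hcL hcM).symm hne

lemma nonsingle_has_horiz {P : Finset Cell} {c : Cell} (hc : c ∈ P)
    (hns : ¬ IsSingleCell P c) :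
    ∃ V, IsMaxInterval P V ∧ c ∈ V ∧ IsHorizInterval V ∧ ¬ IsVertInterval V := by
  obtain ⟨L, hL, hcL⟩ := exists_max_mem hc
  have : ¬ ∃! K, IsMaxInterval P K ∧ c ∈ K := fun h => hns ⟨hc, h⟩
  have hM : ∃ M, (IsMaxInterval P M ∧ c ∈ M) ∧ M ≠ L := by
    by_contra h
    push_neg at h
    exact this ⟨L, ⟨hL, hcL⟩, fun M hMM => h M hMM⟩
  obtain ⟨M, ⟨hM, hcM⟩, hne⟩ := hM
  obtain ⟨h2L, h2M⟩ := max_card_two hL hM (Ne.symm hne) hcL hcM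
  rcases hL.1.1 with hLh | hLv <;> rcases hM.1.1 with hMh | hMv
  · exact absurd (horiz_parallel_eq hL hM hLh hMh hcL hcM).symm hne
  · refine ⟨L, hL, hcL, hLh, fun hLv => ?_⟩
    have := both_card_le_one hLh hLv; omega
  · refine ⟨M, hM, hcM, hMh, fun hMv => ?_⟩
    have := both_card_le_one hMh hMv; omega
  · exact absurd (vert_parallel_eq hL hM hLv hMv hcL hcM).symm hne

open scoped Classical in
noncomputable def configs (P : Finset Cell) : Finset (Finset Cell) :=
  P.powerset.filter (fun S => IsRookConfig P S)

lemma empty_config (P : Finset Cell) : ∅ ∈ configs P := by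
  classical
  simp only [configs, Finset.mem_filter, Finset.mem_powerset]
  exact ⟨Finset.empty_subset _, Finset.empty_subset _, by simp⟩

lemma mem_configs {P S : Finset Cell} : S ∈ configs P ↔ IsRookConfig P S := by
  classical
  simp only [configs, Finset.mem_filter, Finset.mem_powerset]
  exact ⟨fun h => h.2, fun h => ⟨h.1, h⟩⟩

lemma rookNumber_eq_sup (P : Finset Cell) :
    rookNumber P = (configs P).sup Finset.card := by
  classical
  have hpoly : rookPoly P = ∑ S ∈ configs P, (X : Polynomial ℤ) ^ S.card := rfl
  unfold rookNumber
  rw [hpoly]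
  apply le_antisymm
  · apply Polynomial.natDegree_sum_le_of_forall_le
    intro S hS
    rw [Polynomial.natDegree_X_pow]
    exact Finset.le_sup hS
  · set N := (configs P).sup Finset.card with hN
    obtain ⟨S₀, hS₀, hNcard⟩ := Finset.exists_mem_eq_sup (configs P) ⟨∅, empty_config P⟩
      Finset.card
    apply Polynomial.le_natDegree_of_ne_zero
    rw [Polynomial.finset_sum_coeff]
    have : ∀ S ∈ configs P, ((X : Polynomial ℤ) ^ S.card).coeff N = if S.card = N then 1 else 0 := by
      intro S hS
      rw [Polynomial.coeff_X_pow]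
      simp [eq_comm]
    rw [Finset.sum_congr rfl this, Finset.sum_boole]
    have hmem : S₀ ∈ (configs P).filter (fun S => S.card = N) := by
      simp only [Finset.mem_filter]
      exact ⟨hS₀, hNcard.symm⟩
    have hpos : 0 < ((configs P).filter (fun S => S.card = N)).card :=
      Finset.card_pos.2 ⟨S₀, hmem⟩
    exact_mod_cast Nat.cast_ne_zero.2 hpos.ne'

open scoped Classical in
noncomputable def singles (P : Finset Cell) : Finset Cell := P.filter (fun c => IsSingleCell P c)

lemma mem_singles {P : Finset Cell} {c : Cell} :
    c ∈ singles P ↔ IsSingleCell P c := by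
  classical
  simp only [singles, Finset.mem_filter]
  exact ⟨fun h => h.2, fun h => ⟨h.1, h⟩⟩

lemma singles_no_common {P : Finset Cell} (hS : SProperty P) {c d : Cell}
    (hc : IsSingleCell P c) (hd : IsSingleCell P d) (hne : c ≠ d) :
    ¬ ∃ K, IsInnerInterval P K ∧ c ∈ K ∧ d ∈ K := by
  rintro ⟨K, hK, hcK, hdK⟩
  obtain ⟨L, hL, hKL⟩ := exists_max_extend hK
  obtain ⟨x, -, huniq⟩ := hS L hL
  exact hne ((huniq c ⟨hKL hcK, hc⟩).trans (huniq d ⟨hKL hdK, hd⟩).symm)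

lemma singles_config {P : Finset Cell} (hS : SProperty P) : IsRookConfig P (singles P) := by
  classical
  refine ⟨fun c hc => (mem_singles.1 hc).1, ?_⟩
  intro c hc d hd hne
  exact singles_no_common hS (mem_singles.1 hc) (mem_singles.1 hd) hne

lemma config_card_le_singles {P : Finset Cell} (hS : SProperty P) {S : Finset Cell}
    (h : IsRookConfig P S) : S.card ≤ (singles P).card := by
  classical
  set f : Cell → Cell := fun c =>
    if hex : ∃ L, IsMaxInterval P L ∧ c ∈ L then (hS hex.choose hex.choose_spec.1).choose
    else c with hf
  have key : ∀ c ∈ S, ∃ L, IsMaxInterval P L ∧ c ∈ L ∧ f c ∈ L ∧ IsSingleCell P (f c) := by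
    intro c hc
    have hex : ∃ L, IsMaxInterval P L ∧ c ∈ L := exists_max_mem (h.1 hc)
    have hspec := (hS hex.choose hex.choose_spec.1).choose_spec.1
    have hfc : f c = (hS hex.choose hex.choose_spec.1).choose := by
      simp only [hf, dif_pos hex]
    refine ⟨hex.choose, hex.choose_spec.1, hex.choose_spec.2, ?_, ?_⟩
    · rw [hfc]; exact hspec.1
    · rw [hfc]; exact hspec.2
  apply Finset.card_le_card_of_injOn f
  · intro c hc
    obtain ⟨L, -, -, -, hsing⟩ := key c hc
    exact mem_singles.2 hsing
  · intro c hc d hd hfcd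
    by_contra hne
    obtain ⟨L, hL, hcL, hsL, hsingc⟩ := key c hc
    obtain ⟨M, hM, hdM, hsM, -⟩ := key d hd
    have hLM : L = M := single_unique_max hsingc hL hsL hM (hfcd ▸ hsM)
    exact h.2 c hc d hd hne ⟨L, hL.1, hcL, hLM ▸ hdM⟩

lemma sup_configs_eq_singles {P : Finset Cell} (hS : SProperty P) :
    (configs P).sup Finset.card = (singles P).card := by
  apply le_antisymm
  · exact Finset.sup_le fun S hS' => config_card_le_singles hS (mem_configs.1 hS')
  · exact Finset.le_sup (mem_configs.2 (singles_config hS))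

lemma rookNumber_eq_singles {P : Finset Cell} (hS : SProperty P) :
    rookNumber P = (singles P).card := by
  rw [rookNumber_eq_sup, sup_configs_eq_singles hS]

-- singles of P restricted to a subset Qi form a rook config of Qi
lemma singles_inter_config {P Qi : Finset Cell} (hS : SProperty P) (hQi : Qi ⊆ P) :
    IsRookConfig Qi (singles P ∩ Qi) := by
  refine ⟨Finset.inter_subset_right, ?_⟩
  intro c hc d hd hne
  rintro ⟨K, hK, hcK, hdK⟩
  have hKP : IsInnerInterval P K := ⟨hK.1, hK.2.trans hQi⟩
  exact singles_no_common hS (mem_singles.1 (Finset.mem_inter.1 hc).1)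
    (mem_singles.1 (Finset.mem_inter.1 hd).1) hne ⟨K, hKP, hcK, hdK⟩

lemma vert_interval_propagate {Qi R : Finset Cell} {c : Cell}
    (hRv : IsVertInterval R) (hc : c ∈ R) (hcQ : c ∈ Qi)
    (hstep : ∀ z ∈ R, ∀ w ∈ Qi, Adj z w → z ∈ Qi) : R ⊆ Qi := by
  obtain ⟨i, a, b, hab, rfl⟩ := hRv
  obtain ⟨ha, hb, hi⟩ := mem_vert_img.1 hc
  have hup : ∀ y, c.2 ≤ y → y ≤ b → ((i, y) : Cell) ∈ Qi := by
    refine Int.le_induction ?_ ?_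
    · intro _
      have : ((i, c.2) : Cell) = c := Prod.ext hi.symm rfl
      rwa [this]
    · intro n hn ih hnb
      have h1 : ((i, n) : Cell) ∈ Qi := ih (by omega)
      have h2 : ((i, n + 1) : Cell) ∈ (Finset.Icc a b).image (fun y => ((i, y) : Cell)) :=
        mem_vert_img.2 ⟨by omega, by omega, rfl⟩
      exact hstep _ h2 _ h1 (by simp [Adj])
  have hdown : ∀ y, y ≤ c.2 → a ≤ y → ((i, y) : Cell) ∈ Qi := by
    have := Int.le_induction_down (motive := fun y _ => a ≤ y → ((i, y) : Cell) ∈ Qi) (m := c.2) ?_ ?_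
    · intro y hy ha'; exact this y hy ha'
    · intro _
      have : ((i, c.2) : Cell) = c := Prod.ext hi.symm rfl
      rwa [this]
    · intro n hn ih hna
      have h1 : ((i, n) : Cell) ∈ Qi := ih (by omega)
      have h2 : ((i, n - 1) : Cell) ∈ (Finset.Icc a b).image (fun y => ((i, y) : Cell)) :=
        mem_vert_img.2 ⟨by omega, by omega, rfl⟩
      exact hstep _ h2 _ h1 (by simp [Adj])
  intro z hz
  obtain ⟨ha', hb', hi'⟩ := mem_vert_img.1 hz
  have hzz : z = ((i, z.2) : Cell) := Prod.ext hi' rfl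
  rcases le_total c.2 z.2 with h | h
  · rw [hzz]; exact hup z.2 h hb'
  · rw [hzz]; exact hdown z.2 h ha'

lemma horiz_interval_propagate {Qi R : Finset Cell} {c : Cell}
    (hRv : IsHorizInterval R) (hc : c ∈ R) (hcQ : c ∈ Qi)
    (hstep : ∀ z ∈ R, ∀ w ∈ Qi, Adj z w → z ∈ Qi) : R ⊆ Qi := by
  obtain ⟨j, a, b, hab, rfl⟩ := hRv
  obtain ⟨ha, hb, hj⟩ := mem_horiz_img.1 hc
  have hup : ∀ y, c.1 ≤ y → y ≤ b → ((y, j) : Cell) ∈ Qi := by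
    refine Int.le_induction ?_ ?_
    · intro _
      have : ((c.1, j) : Cell) = c := Prod.ext rfl hj.symm
      rwa [this]
    · intro n hn ih hnb
      have h1 : ((n, j) : Cell) ∈ Qi := ih (by omega)
      have h2 : ((n + 1, j) : Cell) ∈ (Finset.Icc a b).image (fun x => ((x, j) : Cell)) :=
        mem_horiz_img.2 ⟨by omega, by omega, rfl⟩
      exact hstep _ h2 _ h1 (by simp [Adj])
  have hdown : ∀ y, y ≤ c.1 → a ≤ y → ((y, j) : Cell) ∈ Qi := by
    have := Int.le_induction_down (motive := fun y _ => a ≤ y → ((y, j) : Cell) ∈ Qi) (m := c.1) ?_ ?_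
    · intro y hy ha'; exact this y hy ha'
    · intro _
      have : ((c.1, j) : Cell) = c := Prod.ext rfl hj.symm
      rwa [this]
    · intro n hn ih hna
      have h1 : ((n, j) : Cell) ∈ Qi := ih (by omega)
      have h2 : ((n - 1, j) : Cell) ∈ (Finset.Icc a b).image (fun x => ((x, j) : Cell)) :=
        mem_horiz_img.2 ⟨by omega, by omega, rfl⟩
      exact hstep _ h2 _ h1 (by simp [Adj])
  intro z hz
  obtain ⟨ha', hb', hj'⟩ := mem_horiz_img.1 hz
  have hzz : z = ((z.1, j) : Cell) := Prod.ext rfl hj'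
  rcases le_total c.1 z.1 with h | h
  · rw [hzz]; exact hup z.1 h hb'
  · rw [hzz]; exact hdown z.1 h ha'

lemma main_le_vert {P J Qi : Finset Cell} (hS : SProperty P)
    (hJmax : IsMaxInterval P J) (hJv : IsVertInterval J)
    (C : Cell)
    (hCV : ∀ V, IsMaxInterval P V → C ∈ V → ¬ IsVertInterval V)
    (hQi : Qi ⊆ (P.erase C) \ J)
    (hQadj : ∀ z ∈ (P.erase C) \ J, ∀ w ∈ Qi, Adj z w → z ∈ Qi)
    {S : Finset Cell} (hconf : IsRookConfig Qi S) :
    S.card ≤ (singles P ∩ Qi).card := by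
  classical
  have hQiP : Qi ⊆ P := fun z hz => Finset.mem_of_mem_erase (Finset.mem_sdiff.1 (hQi hz)).1
  set f : Cell → Cell := fun c =>
    if hex : ∃ V, IsMaxInterval P V ∧ c ∈ V ∧ IsVertInterval V ∧ ¬ IsHorizInterval V then
      (hS hex.choose hex.choose_spec.1).choose
    else c with hf
  have key : ∀ c ∈ S, f c ∈ singles P ∩ Qi ∧
      (f c = c ∨ ∃ V, IsMaxInterval P V ∧ IsInnerInterval Qi V ∧ c ∈ V ∧ f c ∈ V) := by
    intro c hc
    have hcQ : c ∈ Qi := hconf.1 hc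
    have hcP : c ∈ P := hQiP hcQ
    by_cases hsing : IsSingleCell P c
    · have hfc : f c = c := by
        rw [hf]
        simp only []
        split
        · next hex =>
          -- the chosen vertical maximal contains c; but c is single; chosen single of it is c?
          -- containing c. The single of V: by S-property V has unique single; c ∈ V is single,
          -- so chosen = c.
          obtain ⟨hVmax, hcV, -, -⟩ := hex.choose_spec
          have hspec := (hS hex.choose hVmax).choose_spec
          exact (hspec.2 c ⟨hcV, hsing⟩).symm
        · rfl
      refine ⟨?_, Or.inl hfc⟩
      rw [hfc]
      exact Finset.mem_inter.2 ⟨mem_singles.2 hsing, hcQ⟩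
    · obtain ⟨V, hVmax, hcV, hVv, hVnh⟩ := nonsingle_has_vert hcP hsing
      have hex : ∃ V, IsMaxInterval P V ∧ c ∈ V ∧ IsVertInterval V ∧ ¬ IsHorizInterval V :=
        ⟨V, hVmax, hcV, hVv, hVnh⟩
      -- the chosen V' equals V by vert_parallel_eq? not necessarily same, but both vertical
      -- maximal containing c, hence equal.
      obtain ⟨hVmax', hcV', hVv', -⟩ := hex.choose_spec
      have hVeq : hex.choose = V := vert_parallel_eq hVmax' hVmax hVv' hVv hcV' hcV
      have hspec := (hS hex.choose hVmax').choose_spec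
      have hfc : f c = (hS hex.choose hVmax').choose := by
        rw [hf]; simp only [dif_pos hex]
      -- V ⊆ Qi
      have hVsub : V ⊆ (P.erase C) \ J := by
        intro z hz
        refine Finset.mem_sdiff.2 ⟨Finset.mem_erase.2 ⟨?_, hVmax.1.2 hz⟩, ?_⟩
        · rintro rfl
          exact hCV V hVmax hz hVv
        · intro hzJ
          have : V = J := vert_parallel_eq hVmax hJmax hVv hJv hz hzJ
          have : c ∈ J := this ▸ hcV
          exact (Finset.mem_sdiff.1 (hQi hcQ)).2 this
      have hVQi : V ⊆ Qi := vert_interval_propagate hVv hcV hcQ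
        (fun z hz w hw hadj => hQadj z (hVsub hz) w hw hadj)
      have hfcV : f c ∈ V := by rw [hfc, ← hVeq]; exact hspec.1.1
      have hfsing : IsSingleCell P (f c) := by rw [hfc]; exact hspec.1.2
      refine ⟨Finset.mem_inter.2 ⟨mem_singles.2 hfsing, hVQi hfcV⟩, Or.inr ?_⟩
      exact ⟨V, hVmax, ⟨Or.inr hVv, hVQi⟩, hcV, hfcV⟩
  apply Finset.card_le_card_of_injOn f (fun c hc => (key c hc).1)
  intro c hc d hd hfcd
  by_contra hne
  rcases (key c hc).2 with hfc | ⟨V, hVmax, hVQ, hcV, hfcV⟩ <;>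
    rcases (key d hd).2 with hfd | ⟨W, hWmax, hWQ, hdW, hfdW⟩
  · exact hne (by rw [← hfc, ← hfd, hfcd])
  · -- c single-ish (f c = c), d in W with f d ∈ W; f d = f c = c
    have hcW : c ∈ W := by rw [← hfc, hfcd]; exact hfdW
    exact hconf.2 c hc d hd hne ⟨W, hWQ, hcW, hdW⟩
  · have hdV : d ∈ V := by rw [← hfd, ← hfcd]; exact hfcV
    exact hconf.2 c hc d hd hne ⟨V, hVQ, hcV, hdV⟩
  · have hsing : IsSingleCell P (f c) := mem_singles.1 (Finset.mem_inter.1 (key c hc).1).1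
    have hVW : V = W := single_unique_max hsing hVmax hfcV hWmax (hfcd ▸ hfdW)
    exact hconf.2 c hc d hd hne ⟨V, hVQ, hcV, hVW ▸ hdW⟩

lemma main_le_horiz {P J Qi : Finset Cell} (hS : SProperty P)
    (hJmax : IsMaxInterval P J) (hJv : IsHorizInterval J)
    (C : Cell)
    (hCV : ∀ V, IsMaxInterval P V → C ∈ V → ¬ IsHorizInterval V)
    (hQi : Qi ⊆ (P.erase C) \ J)
    (hQadj : ∀ z ∈ (P.erase C) \ J, ∀ w ∈ Qi, Adj z w → z ∈ Qi)
    {S : Finset Cell} (hconf : IsRookConfig Qi S) :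
    S.card ≤ (singles P ∩ Qi).card := by
  classical
  have hQiP : Qi ⊆ P := fun z hz => Finset.mem_of_mem_erase (Finset.mem_sdiff.1 (hQi hz)).1
  set f : Cell → Cell := fun c =>
    if hex : ∃ V, IsMaxInterval P V ∧ c ∈ V ∧ IsHorizInterval V ∧ ¬ IsVertInterval V then
      (hS hex.choose hex.choose_spec.1).choose
    else c with hf
  have key : ∀ c ∈ S, f c ∈ singles P ∩ Qi ∧
      (f c = c ∨ ∃ V, IsMaxInterval P V ∧ IsInnerInterval Qi V ∧ c ∈ V ∧ f c ∈ V) := by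
    intro c hc
    have hcQ : c ∈ Qi := hconf.1 hc
    have hcP : c ∈ P := hQiP hcQ
    by_cases hsing : IsSingleCell P c
    · have hfc : f c = c := by
        rw [hf]
        simp only []
        split
        · next hex =>
          -- the chosen vertical maximal contains c; but c is single; chosen single of it is c?
          -- containing c. The single of V: by S-property V has unique single; c ∈ V is single,
          -- so chosen = c.
          obtain ⟨hVmax, hcV, -, -⟩ := hex.choose_spec
          have hspec := (hS hex.choose hVmax).choose_spec
          exact (hspec.2 c ⟨hcV, hsing⟩).symm
        · rfl
      refine ⟨?_, Or.inl hfc⟩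
      rw [hfc]
      exact Finset.mem_inter.2 ⟨mem_singles.2 hsing, hcQ⟩
    · obtain ⟨V, hVmax, hcV, hVv, hVnh⟩ := nonsingle_has_horiz hcP hsing
      have hex : ∃ V, IsMaxInterval P V ∧ c ∈ V ∧ IsHorizInterval V ∧ ¬ IsVertInterval V :=
        ⟨V, hVmax, hcV, hVv, hVnh⟩
      -- the chosen V' equals V by horiz_parallel_eq? not necessarily same, but both vertical
      -- maximal containing c, hence equal.
      obtain ⟨hVmax', hcV', hVv', -⟩ := hex.choose_spec
      have hVeq : hex.choose = V := horiz_parallel_eq hVmax' hVmax hVv' hVv hcV' hcV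
      have hspec := (hS hex.choose hVmax').choose_spec
      have hfc : f c = (hS hex.choose hVmax').choose := by
        rw [hf]; simp only [dif_pos hex]
      -- V ⊆ Qi
      have hVsub : V ⊆ (P.erase C) \ J := by
        intro z hz
        refine Finset.mem_sdiff.2 ⟨Finset.mem_erase.2 ⟨?_, hVmax.1.2 hz⟩, ?_⟩
        · rintro rfl
          exact hCV V hVmax hz hVv
        · intro hzJ
          have : V = J := horiz_parallel_eq hVmax hJmax hVv hJv hz hzJ
          have : c ∈ J := this ▸ hcV
          exact (Finset.mem_sdiff.1 (hQi hcQ)).2 this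
      have hVQi : V ⊆ Qi := horiz_interval_propagate hVv hcV hcQ
        (fun z hz w hw hadj => hQadj z (hVsub hz) w hw hadj)
      have hfcV : f c ∈ V := by rw [hfc, ← hVeq]; exact hspec.1.1
      have hfsing : IsSingleCell P (f c) := by rw [hfc]; exact hspec.1.2
      refine ⟨Finset.mem_inter.2 ⟨mem_singles.2 hfsing, hVQi hfcV⟩, Or.inr ?_⟩
      exact ⟨V, hVmax, ⟨Or.inl hVv, hVQi⟩, hcV, hfcV⟩
  apply Finset.card_le_card_of_injOn f (fun c hc => (key c hc).1)
  intro c hc d hd hfcd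
  by_contra hne
  rcases (key c hc).2 with hfc | ⟨V, hVmax, hVQ, hcV, hfcV⟩ <;>
    rcases (key d hd).2 with hfd | ⟨W, hWmax, hWQ, hdW, hfdW⟩
  · exact hne (by rw [← hfc, ← hfd, hfcd])
  · -- c single-ish (f c = c), d in W with f d ∈ W; f d = f c = c
    have hcW : c ∈ W := by rw [← hfc, hfcd]; exact hfdW
    exact hconf.2 c hc d hd hne ⟨W, hWQ, hcW, hdW⟩
  · have hdV : d ∈ V := by rw [← hfd, ← hfcd]; exact hfcV
    exact hconf.2 c hc d hd hne ⟨V, hVQ, hcV, hdV⟩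
  · have hsing : IsSingleCell P (f c) := mem_singles.1 (Finset.mem_inter.1 (key c hc).1).1
    have hVW : V = W := single_unique_max hsing hVmax hfcV hWmax (hfcd ▸ hfdW)
    exact hconf.2 c hc d hd hne ⟨V, hVQ, hcV, hVW ▸ hdW⟩

lemma adj_not_self {x : Cell} : ¬ Adj x x := by simp [Adj]

lemma max_singleton_all {P : Finset Cell} (hP : IsPolyomino P) {x : Cell}
    (hL : IsMaxInterval P ({x} : Finset Cell)) : P = {x} := by
  have hx : x ∈ P := hL.1.2 (Finset.mem_singleton_self x)
  have hnone : ∀ y ∈ P, ¬ Adj x y := by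
    intro y hy hadj
    have hpair := pair_inner hx hy hadj
    have := hL.2 _ hpair (by intro z hz; rw [Finset.mem_singleton.1 hz]; exact Finset.mem_insert_self x {y})
    have hyx : y = x := by
      have : y ∈ ({x} : Finset Cell) := this ▸ (Finset.mem_insert.2 (Or.inr (Finset.mem_singleton_self y)))
      exact Finset.mem_singleton.1 this
    rw [hyx] at hadj
    exact adj_not_self hadj
  have hreach : ∀ z, ReachIn P x z → z = x := by
    intro z hz
    induction hz with
    | refl => rfl
    | tail h step ih =>
      obtain ⟨h1, h2, h3⟩ := step
      rw [ih] at h3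
      exact absurd h3 (hnone _ h2)
  apply Finset.eq_singleton_iff_unique_mem.2 ⟨hx, fun z hz => hreach z (hP.2 x hx z hz)⟩

theorem sum_rookNumbers' (P I J PI : Finset Cell) (hP : IsPolyomino P)
    (hS : SProperty P)
    (hImax : IsMaxInterval P I) (hJmax : IsMaxInterval P J)
    (hIJint : ∃ c, I ∩ J = {c})
    (hrest : (P \ (I ∪ PI)).Nonempty) (hPIsub : PI ⊆ J)
    (C : Cell) (hC : C ∈ I) (hCs : IsSingleCell P C)
    (Q : Finset Cell) (hQ : Q = P.erase C)
    (k : ℕ) (Qs : Fin k → Finset Cell)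
    (hunion : Q \ J = Finset.univ.biUnion Qs)
    (hdisj : ∀ i j, i ≠ j → Disjoint (Qs i) (Qs j))
    (hsep : ∀ i j, i ≠ j → ∀ a ∈ Qs i, ∀ b ∈ Qs j, ¬ Adj a b) :
    (∑ i, rookNumber (Qs i)) + 2 = rookNumber P := by
  classical
  obtain ⟨c0, hc0⟩ := hIJint
  have hc0I : c0 ∈ I := (Finset.mem_inter.1 (hc0 ▸ Finset.mem_singleton_self c0)).1
  have hc0J : c0 ∈ J := (Finset.mem_inter.1 (hc0 ▸ Finset.mem_singleton_self c0)).2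
  have hIJ : I ≠ J := by
    intro h
    have hII : I ∩ J = I := by rw [← h, Finset.inter_self]
    have hIsing : I = {c0} := by rw [← hII, hc0]
    have hPsing : P = {c0} := max_singleton_all hP (hIsing ▸ hImax)
    obtain ⟨z, hz⟩ := hrest
    have hzP : z ∈ P := (Finset.mem_sdiff.1 hz).1
    have : z = c0 := Finset.mem_singleton.1 (hPsing ▸ hzP)
    exact (Finset.mem_sdiff.1 hz).2 (Finset.mem_union.2 (Or.inl (this ▸ (hIsing ▸ Finset.mem_singleton_self c0) : z ∈ I)))
  have hIuniq : ∀ V, IsMaxInterval P V → C ∈ V → V = I :=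
    fun V hV hCV' => single_unique_max hCs hV hCV' hImax hC
  have hCnotJ : C ∉ J := fun h => hIJ ((hIuniq J hJmax h).symm)
  set E := (hS J hJmax).choose with hE
  have hEspec := (hS J hJmax).choose_spec
  have hEJ : E ∈ J := hEspec.1.1
  have hEsing : IsSingleCell P E := hEspec.1.2
  have hCE : C ≠ E := fun h => hCnotJ (h ▸ hEJ)
  -- componentwise hypotheses
  have hQisub : ∀ i, Qs i ⊆ P.erase C \ J := by
    intro i
    rw [← hQ, hunion]
    exact Finset.subset_biUnion_of_mem Qs (Finset.mem_univ i)
  have hQadj : ∀ i, ∀ z ∈ P.erase C \ J, ∀ w ∈ Qs i, Adj z w → z ∈ Qs i := by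
    intro i z hz w hw hadj
    have hz' : z ∈ Q \ J := by rw [hQ]; exact hz
    rw [hunion] at hz'
    obtain ⟨j, -, hj⟩ := Finset.mem_biUnion.1 hz'
    by_contra hzi
    have hij : j ≠ i := fun h => hzi (h ▸ hj)
    exact hsep j i hij z hj w hw hadj
  have hQiP : ∀ i, Qs i ⊆ P :=
    fun i z hz => Finset.mem_of_mem_erase (Finset.mem_sdiff.1 (hQisub i hz)).1
  -- rook numbers of the components
  have hcomp : ∀ i, rookNumber (Qs i) = (singles P ∩ Qs i).card := by
    intro i
    rw [rookNumber_eq_sup]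
    apply le_antisymm
    · apply Finset.sup_le
      intro S hSmem
      have hconf := mem_configs.1 hSmem
      rcases hJmax.1.1 with hJh | hJv
      · -- J horizontal
        have hCH : ∀ V, IsMaxInterval P V → C ∈ V → ¬ IsHorizInterval V := by
          intro V hV hCmem hVh
          have hVI : V = I := hIuniq V hV hCmem
          rw [hVI] at hVh
          exact hIJ (horiz_parallel_eq hImax hJmax hVh hJh hc0I hc0J)
        exact main_le_horiz hS hJmax hJh C hCH (hQisub i) (hQadj i) hconf
      · -- J vertical
        have hCV : ∀ V, IsMaxInterval P V → C ∈ V → ¬ IsVertInterval V := by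
          intro V hV hCmem hVv
          have hVI : V = I := hIuniq V hV hCmem
          rw [hVI] at hVv
          exact hIJ (vert_parallel_eq hImax hJmax hVv hJv hc0I hc0J)
        exact main_le_vert hS hJmax hJv C hCV (hQisub i) (hQadj i) hconf
    · exact Finset.le_sup (mem_configs.2 (singles_inter_config hS (hQiP i)))
  -- decomposition of the singles of P
  have hCsing : C ∈ singles P := mem_singles.2 hCs
  have hEsingm : E ∈ singles P := mem_singles.2 hEsing
  set A := singles P ∩ (Q \ J) with hA
  have hsplit : singles P = insert C (insert E A) := by
    ext s
    constructor
    · intro hs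
      have hssing : IsSingleCell P s := mem_singles.1 hs
      by_cases h1 : s = C
      · exact Finset.mem_insert.2 (Or.inl h1)
      by_cases h2 : s = E
      · exact Finset.mem_insert.2 (Or.inr (Finset.mem_insert.2 (Or.inl h2)))
      have hsJ : s ∉ J := by
        intro hsJ
        exact h2 (hEspec.2 s ⟨hsJ, hssing⟩)
      refine Finset.mem_insert.2 (Or.inr (Finset.mem_insert.2 (Or.inr ?_)))
      refine Finset.mem_inter.2 ⟨hs, ?_⟩
      rw [hQ]
      exact Finset.mem_sdiff.2 ⟨Finset.mem_erase.2 ⟨h1, hssing.1⟩, hsJ⟩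
    · intro hs
      rcases Finset.mem_insert.1 hs with rfl | hs
      · exact hCsing
      rcases Finset.mem_insert.1 hs with rfl | hs
      · exact hEsingm
      exact (Finset.mem_inter.1 hs).1
  have hCnotA : C ∉ insert E A := by
    intro h
    rcases Finset.mem_insert.1 h with h | h
    · exact hCE h
    · have : C ∈ Q \ J := (Finset.mem_inter.1 h).2
      rw [hQ] at this
      exact (Finset.mem_erase.1 (Finset.mem_sdiff.1 this).1).1 rfl
  have hEnotA : E ∉ A := by
    intro h
    have : E ∈ Q \ J := (Finset.mem_inter.1 h).2
    exact (Finset.mem_sdiff.1 this).2 hEJ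
  have hcards : (singles P).card = A.card + 2 := by
    rw [hsplit, Finset.card_insert_of_notMem hCnotA, Finset.card_insert_of_notMem hEnotA]
  -- A as a disjoint union
  have hAunion : A = Finset.univ.biUnion (fun i => singles P ∩ Qs i) := by
    rw [hA, hunion]
    ext z
    simp only [Finset.mem_inter, Finset.mem_biUnion, Finset.mem_univ, true_and]
    tauto
  have hAcard : A.card = ∑ i, (singles P ∩ Qs i).card := by
    rw [hAunion]
    exact Finset.card_biUnion (fun i _ j _ hij =>
      Finset.disjoint_of_subset_left Finset.inter_subset_right
        (Finset.disjoint_of_subset_right Finset.inter_subset_right (hdisj i j hij)))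
  rw [rookNumber_eq_singles hS, hcards, hAcard]
  congr 1
  exact Finset.sum_congr rfl (fun i _ => hcomp i)

/-- The rook numbers of the components of `Q \ J` sum to `r(P) - 2`. -/
theorem sum_rookNumbers (P I J PI : Finset Cell) (hP : IsPolyomino P) (hs : IsSimple P)
    (ht : IsThin P) (hS : SProperty P) (hcd : IsCollapseDatum P I J PI)
    (C : Cell) (hC : C ∈ I) (hCs : IsSingleCell P C)
    (Q : Finset Cell) (hQ : Q = P.erase C)
    (k : ℕ) (Qs : Fin k → Finset Cell)
    (hunion : Q \ J = Finset.univ.biUnion Qs)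
    (hdisj : ∀ i j, i ≠ j → Disjoint (Qs i) (Qs j))
    (hconn : ∀ i, IsPolyomino (Qs i))
    (hsep : ∀ i j, i ≠ j → ∀ a ∈ Qs i, ∀ b ∈ Qs j, ¬ Adj a b) :
    (∑ i, rookNumber (Qs i)) + 2 = rookNumber P := by
  obtain ⟨hImax, hJmax, hIJint, -, hPIsub, -, -, hrest, -⟩ := hcd
  exact sum_rookNumbers' P I J PI hP hS hImax hJmax hIJint hrest hPIsub C hC hCs Q hQ k Qs
    hunion hdisj hsep
end

section
/- Let P be a simple thin polyomino with the S-property. Then P has a unique rook configuration of maximum size r(P), namely the set of all single cells of P. -/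
open Polynomial

/-!
Sending each cell of a rook configuration to a maximal inner interval through it is injective, so
`r(P)` is at most the number `m` of maximal inner intervals. Under the S-property the single cells
are in bijection with the maximal inner intervals, and two of them never share an inner interval
(it would extend to a maximal one with two single cells), so they form a rook configuration of
size `m`. A rook configuration `S` containing a non-single cell `s` is smaller: `s` lies in two
maximal intervals that no other cell of `S` meets, so `|S| - 1 ≤ m - 2`.
-/

open scoped Classical

section RookConfigurations

variable {P S : Finset Cell}

theorem IsInnerInterval.singleton {c : Cell} (hc : c ∈ P) : IsInnerInterval P {c} :=
  ⟨Or.inl ⟨c.2, c.1, c.1, le_rfl, by simp⟩, Finset.singleton_subset_iff.mpr hc⟩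

theorem IsInnerInterval.exists_isMaxInterval_superset {I : Finset Cell}
    (hI : IsInnerInterval P I) : ∃ M, IsMaxInterval P M ∧ I ⊆ M := by
  obtain ⟨M, hIM, hM⟩ :=
    (P.powerset.filter (IsInnerInterval P)).exists_le_maximal (by simpa using ⟨hI.2, hI⟩)
  have hM' : ∀ J, IsInnerInterval P J → M ⊆ J → J ⊆ M := fun J hJ =>
    hM.2 (by simpa using ⟨hJ.2, hJ⟩)
  exact ⟨M, ⟨(Finset.mem_filter.mp hM.1).2,
    fun J hJ hMJ => (hM' J hJ hMJ).antisymm hMJ⟩, hIM⟩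

theorem exists_isMaxInterval_mem {c : Cell} (hc : c ∈ P) : ∃ M, IsMaxInterval P M ∧ c ∈ M := by
  obtain ⟨M, hM, hcM⟩ := (IsInnerInterval.singleton hc).exists_isMaxInterval_superset
  exact ⟨M, hM, Finset.singleton_subset_iff.mp hcM⟩

theorem IsRookConfig.mono {T : Finset Cell} (hS : IsRookConfig P S) (hTS : T ⊆ S) :
    IsRookConfig P T :=
  ⟨hTS.trans hS.1, fun c hc d hd => hS.2 c (hTS hc) d (hTS hd)⟩

theorem IsRookConfig.eq_of_mem_interval {I : Finset Cell} (hS : IsRookConfig P S)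
    (hI : IsInnerInterval P I) {c d : Cell} (hc : c ∈ S) (hd : d ∈ S) (hcI : c ∈ I)
    (hdI : d ∈ I) : c = d := by
  by_contra hcd
  exact hS.2 c hc d hd hcd ⟨I, hI, hcI, hdI⟩

theorem IsRookConfig.card_le_of_covered {A : Finset (Finset Cell)} (hS : IsRookConfig P S)
    (hA : ∀ I ∈ A, IsInnerInterval P I) (hcover : ∀ c ∈ S, ∃ I ∈ A, c ∈ I) :
    S.card ≤ A.card :=
  Finset.card_le_card_of_forall_subsingleton (· ∈ ·) hcover fun I hI _ hc _ hd =>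
    hS.eq_of_mem_interval (hA I hI) hc.1 hd.1 hc.2 hd.2

noncomputable def maxIntervals (P : Finset Cell) : Finset (Finset Cell) :=
  P.powerset.filter (IsMaxInterval P)

theorem mem_maxIntervals {I : Finset Cell} : I ∈ maxIntervals P ↔ IsMaxInterval P I := by
  simpa [maxIntervals] using fun h : IsMaxInterval P I => h.1.2

theorem IsRookConfig.card_le_card_maxIntervals (hS : IsRookConfig P S) :
    S.card ≤ (maxIntervals P).card :=
  hS.card_le_of_covered (fun _ hI => (mem_maxIntervals.mp hI).1) fun _ hc =>
    let ⟨M, hM, hcM⟩ := exists_isMaxInterval_mem (hS.1 hc)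
    ⟨M, mem_maxIntervals.mpr hM, hcM⟩

-- The other cells of `S` are covered by the maximal intervals avoiding the two through `s`.
theorem IsRookConfig.card_lt_card_maxIntervals (hS : IsRookConfig P S) {s : Cell} (hs : s ∈ S)
    (hsingle : ¬ IsSingleCell P s) : S.card < (maxIntervals P).card := by
  obtain ⟨I₁, hI₁, hsI₁⟩ := exists_isMaxInterval_mem (hS.1 hs)
  obtain ⟨I₂, ⟨hI₂, hsI₂⟩, hne⟩ : ∃ I₂, (IsMaxInterval P I₂ ∧ s ∈ I₂) ∧ I₂ ≠ I₁ := by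
    by_contra! h
    exact hsingle ⟨hS.1 hs, I₁, ⟨hI₁, hsI₁⟩, fun J hJ => h J hJ⟩
  have hcover : ∀ c ∈ S.erase s, ∃ I ∈ ((maxIntervals P).erase I₁).erase I₂, c ∈ I := by
    intro c hc
    obtain ⟨hcs, hcS⟩ := Finset.mem_erase.mp hc
    obtain ⟨M, hM, hcM⟩ := exists_isMaxInterval_mem (hS.1 hcS)
    have hM₁ : M ≠ I₁ := by
      rintro rfl
      exact hcs (hS.eq_of_mem_interval hM.1 hcS hs hcM hsI₁)
    have hM₂ : M ≠ I₂ := by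
      rintro rfl
      exact hcs (hS.eq_of_mem_interval hM.1 hcS hs hcM hsI₂)
    exact ⟨M, by simp [hM₁, hM₂, mem_maxIntervals.mpr hM], hcM⟩
  have hle := (hS.mono (S.erase_subset s)).card_le_of_covered
    (fun I hI => (mem_maxIntervals.mp (Finset.mem_of_mem_erase (Finset.mem_of_mem_erase hI))).1)
    hcover
  have hI₁M := mem_maxIntervals.mpr hI₁
  have hI₂M : I₂ ∈ (maxIntervals P).erase I₁ :=
    Finset.mem_erase.mpr ⟨hne, mem_maxIntervals.mpr hI₂⟩
  have := Finset.card_erase_add_one hs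
  have := Finset.card_erase_add_one hI₂M
  have := Finset.card_erase_add_one hI₁M
  omega

theorem IsRookConfig.subset_singleCells (hS : IsRookConfig P S)
    (hcard : S.card = (maxIntervals P).card) : S ⊆ P.filter (IsSingleCell P) := fun _ hs =>
  Finset.mem_filter.mpr
    ⟨hS.1 hs, by_contra fun h => (hS.card_lt_card_maxIntervals hs h).ne hcard⟩

theorem rookPoly_coeff (P : Finset Cell) (k : ℕ) :
    (rookPoly P).coeff k = ((P.powerset.filter (IsRookConfig P)).filter (·.card = k)).card := by
  simp only [rookPoly, Polynomial.finsetSum_coeff, Polynomial.coeff_X_pow, Finset.sum_boole,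
    eq_comm (a := k)]

theorem IsRookConfig.card_le_rookNumber (hS : IsRookConfig P S) : S.card ≤ rookNumber P := by
  refine Polynomial.le_natDegree_of_ne_zero ?_
  rw [rookPoly_coeff, Nat.cast_ne_zero, Finset.card_ne_zero]
  exact ⟨S, by simpa using ⟨hS.1, hS⟩⟩

theorem rookNumber_le {n : ℕ} (h : ∀ S, IsRookConfig P S → S.card ≤ n) : rookNumber P ≤ n :=
  Polynomial.natDegree_sum_le_of_forall_le _ _ fun S hS =>
    (Polynomial.natDegree_X_pow_le _).trans (h S (Finset.mem_filter.mp hS).2)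

end RookConfigurations

section SProperty

variable {P : Finset Cell} (hS : SProperty P)
include hS

theorem SProperty.isRookConfig_singleCells : IsRookConfig P (P.filter (IsSingleCell P)) := by
  refine ⟨Finset.filter_subset _ _, fun c hc d hd hcd ⟨I, hI, hcI, hdI⟩ => hcd ?_⟩
  obtain ⟨M, hM, hIM⟩ := hI.exists_isMaxInterval_superset
  exact (hS M hM).unique ⟨hIM hcI, (Finset.mem_filter.mp hc).2⟩
    ⟨hIM hdI, (Finset.mem_filter.mp hd).2⟩

theorem SProperty.card_singleCells :
    (P.filter (IsSingleCell P)).card = (maxIntervals P).card := by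
  refine hS.isRookConfig_singleCells.card_le_card_maxIntervals.antisymm ?_
  refine Finset.card_le_card_of_forall_subsingleton (fun I c => c ∈ I) (fun I hI => ?_)
    fun c hc I hI J hJ => ?_
  · obtain ⟨c, ⟨hcI, hc⟩, -⟩ := hS I (mem_maxIntervals.mp hI)
    exact ⟨c, Finset.mem_filter.mpr ⟨hc.1, hc⟩, hcI⟩
  · exact (Finset.mem_filter.mp hc).2.2.unique ⟨mem_maxIntervals.mp hI.1, hI.2⟩
      ⟨mem_maxIntervals.mp hJ.1, hJ.2⟩

theorem SProperty.rookNumber_eq : rookNumber P = (maxIntervals P).card :=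
  (rookNumber_le fun _ h => h.card_le_card_maxIntervals).antisymm
    (hS.card_singleCells ▸ hS.isRookConfig_singleCells.card_le_rookNumber)

end SProperty

open scoped Classical in
theorem unique_max_rook_config_general (P : Finset Cell) (hS : SProperty P) :
    IsRookConfig P (P.filter (fun c => IsSingleCell P c)) ∧
    (P.filter (fun c => IsSingleCell P c)).card = rookNumber P ∧
    ∀ S : Finset Cell, IsRookConfig P S → S.card = rookNumber P →
      S = P.filter (fun c => IsSingleCell P c) := by
  refine ⟨hS.isRookConfig_singleCells, hS.rookNumber_eq ▸ hS.card_singleCells,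
    fun S hR hcard => ?_⟩
  rw [hS.rookNumber_eq] at hcard
  exact Finset.eq_of_subset_of_card_le (hR.subset_singleCells hcard)
    (by rw [hcard, hS.card_singleCells])

open scoped Classical in
/-- A simple thin polyomino with the S-property has a unique maximum rook configuration,
namely the set of all its single cells. -/
theorem unique_max_rook_config (P : Finset Cell) (hP : IsPolyomino P) (hs : IsSimple P)
    (ht : IsThin P) (hS : SProperty P) :
    IsRookConfig P (P.filter (fun c => IsSingleCell P c)) ∧
    (P.filter (fun c => IsSingleCell P c)).card = rookNumber P ∧
    ∀ S : Finset Cell, IsRookConfig P S → S.card = rookNumber P →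
      S = P.filter (fun c => IsSingleCell P c) :=
  unique_max_rook_config_general P hS
end
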